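/- arXiv:1905.07483 — 7 statements merged into one kernel-verified Lean document; each statement's English description precedes it below -/
import Mathlib

section
/- Let V be a finite set with |V| = n ≥ 1, let L ≥ 1 and q ≥ 1 be integers, and let D_1, …, D_q ⊆ V satisfy |D_i| ≥ L for every 1 ≤ i ≤ q. Then there exists a subset R ⊆ V such that R ∩ D_i ≠ ∅ for every 1 ≤ i ≤ q and, as real numbers, |R| ≤ (n/L)·ln q + 1. -/
set_option maxHeartbeats 800000

/-- Greedy hitting-set lemma: if `D₁, …, D_q ⊆ V` each have at least `L`
elements, then there is a set `R ⊆ V` hitting every `D i` with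
`|R| ≤ (n/L)·ln q + 1` (as real numbers). -/
theorem stmt0 {V : Type*} [Fintype V] [DecidableEq V] (n L q : ℕ)
    (hn : Fintype.card V = n) (hn1 : 1 ≤ n) (hL : 1 ≤ L) (hq : 1 ≤ q)
    (D : Fin q → Finset V) (hD : ∀ i, L ≤ (D i).card) :
    ∃ R : Finset V, (∀ i, (R ∩ D i).Nonempty) ∧
      (R.card : ℝ) ≤ ((n : ℝ) / (L : ℝ)) * Real.log q + 1 := by
  have hLn : L ≤ n := by
    have := hD ⟨0, hq⟩
    have h2 : (D ⟨0, hq⟩).card ≤ n := by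
      rw [← hn]; exact Finset.card_le_card (Finset.subset_univ _)
    omega
  have hLpos : (0:ℝ) < L := by exact_mod_cast hL
  have hnpos : (0:ℝ) < n := by exact_mod_cast hn1
  have main : ∀ S : Finset (Fin q), S.Nonempty →
      ∃ R : Finset V, (∀ i ∈ S, (R ∩ D i).Nonempty) ∧
        (R.card : ℝ) ≤ ((n : ℝ) / (L : ℝ)) * Real.log S.card + 1 := by
    intro S
    induction S using Finset.strongInduction with
    | _ S ih =>
      intro hS
      -- find a good element x
      obtain ⟨x, -, hx⟩ : ∃ x ∈ (Finset.univ : Finset V),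
          L * S.card ≤ n * (S.filter (fun i => x ∈ D i)).card := by
        apply Finset.exists_le_of_sum_le
        · rw [← Finset.card_pos, Finset.card_univ, hn]; omega
        · have hdc : ∑ x : V, (S.filter (fun i => x ∈ D i)).card
              = ∑ i ∈ S, (D i).card := by
            simp_rw [Finset.card_filter]
            rw [Finset.sum_comm]
            congr 1; ext i
            simp [Finset.card_filter]
          calc ∑ _x : V, L * S.card = n * (L * S.card) := by
                rw [Finset.sum_const, Finset.card_univ, hn, smul_eq_mul]
            _ ≤ n * ∑ i ∈ S, (D i).card := by
                apply Nat.mul_le_mul_left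
                calc L * S.card = ∑ _i ∈ S, L := by rw [Finset.sum_const]; ring
                  _ ≤ ∑ i ∈ S, (D i).card := Finset.sum_le_sum fun i _ => hD i
            _ = ∑ x : V, n * (S.filter (fun i => x ∈ D i)).card := by
                rw [← Finset.mul_sum, hdc]
      set T := S.filter (fun i => x ∈ D i) with hT
      set S' := S.filter (fun i => x ∉ D i) with hS'
      have hcards : T.card + S'.card = S.card := Finset.card_filter_add_card_filter_not (fun i => x ∈ D i)
      have hScard1 : 1 ≤ S.card := hS.card_pos
      have hTpos : 1 ≤ T.card := by nlinarith [hx, hScard1, hL]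
      obtain ⟨i0, hi0⟩ := Finset.card_pos.mp hTpos
      have hi0S : i0 ∈ S := (Finset.mem_filter.mp hi0).1
      have hi0D : x ∈ D i0 := (Finset.mem_filter.mp hi0).2
      have hlogS : 0 ≤ Real.log S.card :=
        Real.log_nonneg (by exact_mod_cast hScard1)
      rcases S'.eq_empty_or_nonempty with hE | hNE
      · refine ⟨{x}, ?_, ?_⟩
        · intro i hiS
          have hxDi : x ∈ D i := by
            by_contra hc
            have : i ∈ S' := Finset.mem_filter.mpr ⟨hiS, hc⟩
            simp [hE] at this
          exact ⟨x, Finset.mem_inter.mpr ⟨Finset.mem_singleton_self x, hxDi⟩⟩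
        · simp only [Finset.card_singleton, Nat.cast_one]
          have : 0 ≤ (n:ℝ)/L * Real.log S.card := by positivity
          linarith
      · have hsub : S' ⊂ S := by
          refine Finset.ssubset_iff_of_subset (Finset.filter_subset _ _) |>.mpr ?_
          exact ⟨i0, hi0S, by simp [hS', hi0D]⟩
        obtain ⟨R', hR'hit, hR'card⟩ := ih S' hsub hNE
        refine ⟨insert x R', ?_, ?_⟩
        · intro i hiS
          by_cases hxDi : x ∈ D i
          · exact ⟨x, Finset.mem_inter.mpr ⟨Finset.mem_insert_self _ _, hxDi⟩⟩
          · obtain ⟨y, hy⟩ := hR'hit i (Finset.mem_filter.mpr ⟨hiS, hxDi⟩)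
            rw [Finset.mem_inter] at hy
            exact ⟨y, Finset.mem_inter.mpr ⟨Finset.mem_insert_of_mem hy.1, hy.2⟩⟩
        · have hcard_le : (insert x R').card ≤ R'.card + 1 := Finset.card_insert_le _ _
          have hS'1 : 1 ≤ S'.card := hNE.card_pos
          -- n * S'.card ≤ (n - L) * S.card over ℝ
          have hnat : n * S'.card + L * S.card ≤ n * S.card := by nlinarith [hx, hcards]
          have hreal : (n:ℝ) * S'.card ≤ ((n:ℝ) - L) * S.card := by
            have h : (n:ℝ)*S'.card + L*S.card ≤ n*S.card := by exact_mod_cast hnat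
            nlinarith [h]
          have hS'pos : (0:ℝ) < S'.card := by exact_mod_cast hS'1
          have hnL : (0:ℝ) < (n:ℝ) - L := by
            nlinarith [hreal, hS'pos]
          have hlog1 : Real.log S'.card ≤ Real.log (((n:ℝ) - L)/n * S.card) := by
            apply Real.log_le_log hS'pos
            rw [div_mul_eq_mul_div, le_div_iff₀ hnpos]
            nlinarith [hreal]
          have hlog2 : Real.log (((n:ℝ) - L)/n * S.card)
              = Real.log (((n:ℝ) - L)/n) + Real.log S.card := by
            apply Real.log_mul (by positivity) (by positivity)
          have hlog3 : Real.log (((n:ℝ) - L)/n) ≤ -(L/n) := by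
            have h := Real.log_le_sub_one_of_pos (show (0:ℝ) < ((n:ℝ)-L)/n by positivity)
            have : ((n:ℝ) - L)/n - 1 = -(L/n) := by field_simp; ring
            linarith [h, this.le]
          have key : Real.log S'.card + L/n ≤ Real.log S.card := by
            rw [hlog2] at hlog1; linarith
          have : ((insert x R').card : ℝ) ≤ (R'.card : ℝ) + 1 := by exact_mod_cast hcard_le
          have hmul : (n:ℝ)/L * Real.log S'.card + (n:ℝ)/L * (L/n) ≤ (n:ℝ)/L * Real.log S.card := by
            have := mul_le_mul_of_nonneg_left key (le_of_lt (by positivity : (0:ℝ) < (n:ℝ)/L))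
            linarith [this]
          have hone : (n:ℝ)/L * (L/n) = 1 := by field_simp
          linarith [hR'card, hmul, hone.ge, hone.le]
  obtain ⟨R, hhit, hcard⟩ := main Finset.univ ⟨⟨0, hq⟩, Finset.mem_univ _⟩
  refine ⟨R, fun i => hhit i (Finset.mem_univ i), ?_⟩
  simpa [Finset.card_univ] using hcard
end

section
/- The set 𝒟_n = {D(x) : x ∈ V_{√n}} contains at most n paths, each consisting of exactly ⌈√n⌉ edges, and it has the following property: for every long triple (s,t,e) there exist a vertex x ∈ V_{√n} and an s-to-t path P' in G∖{e} of length exactly d_G(s,t,e) such that D(x) is a contiguous subpath of P' (contained in the detour part of P'). -/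
open scoped ENat ENNReal

namespace RP

variable {V : Type*}

/-- `p` is a walk from `u` to `w` in the graph with edge relation `E`:
a nonempty list of vertices, consecutive vertices joined by edges. -/
def IsWalk (E : V → V → Prop) (p : List V) (u w : V) : Prop :=
  p ≠ [] ∧ p.head? = some u ∧ p.getLast? = some w ∧ p.Chain' E

/-- The number of edges of a path given as a list of vertices. -/
def pathLen (p : List V) : ℕ := p.length - 1

/-- Unweighted distance: minimum number of edges of a `u`-to-`w` path (`⊤` if none). -/
noncomputable def dist (E : V → V → Prop) (u w : V) : ℕ∞ :=
  sInf ((fun p => (pathLen p : ℕ∞)) '' {p | IsWalk E p u w})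

/-- Total weight of a path, for edge weights `w`. -/
def wt (w : V → V → ℝ) : List V → ℝ
  | [] => 0
  | [_] => 0
  | a :: b :: rest => w a b + wt w (b :: rest)

/-- Weighted distance: infimum of path weights (`⊤` if there is no path). -/
noncomputable def wdist (E : V → V → Prop) (w : V → V → ℝ) (u x : V) : ℝ≥0∞ :=
  sInf ((fun p => ENNReal.ofReal (wt w p)) '' {p | IsWalk E p u x})

/-- `G' = G ∖ E(P)`: the edge relation of `G` with all edges of the path
`P = ⟨v 0, …, v k⟩` removed. -/
def Eres (E : V → V → Prop) (v : ℕ → V) (k : ℕ) : V → V → Prop :=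
  fun a b => E a b ∧ ¬∃ i, i < k ∧ a = v i ∧ b = v (i + 1)

/-- `G ∖ {e}` where `e = (v a, v (a+1))` is an edge of `P`. -/
def Edel (E : V → V → Prop) (v : ℕ → V) (a : ℕ) : V → V → Prop :=
  fun x y => E x y ∧ ¬(x = v a ∧ y = v (a + 1))

/-- `x` lies on the path `P = ⟨v 0, …, v k⟩`. -/
def onPath (v : ℕ → V) (k : ℕ) (x : V) : Prop := ∃ i ≤ k, x = v i

/-- `Q` decomposes as `⟨v 0, …, v i⟩ ∘ D ∘ ⟨v j, …, v k⟩` where the detour `D` starts at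
`v i`, ends at `v j`, and meets `P` only in its first and last vertices. -/
def Detoured (v : ℕ → V) (k : ℕ) (Q D : List V) : Prop :=
  ∃ i j, i ≤ k ∧ j ≤ k ∧
    Q = ((List.range i).map v) ++ D ++ ((List.range' (j + 1) (k - j)).map v) ∧
    D.head? = some (v i) ∧ D.getLast? = some (v j) ∧
    ∀ x ∈ D, onPath v k x → x = v i ∨ x = v j

/-- `Q` is a replacement path for the triple `(s, t, e)` with `e = (v a, v (a+1))`:
a shortest `s`-to-`t` path in `G ∖ {e}`. -/
def IsRP (E : V → V → Prop) (v : ℕ → V) (s t : V) (a : ℕ) (Q : List V) : Prop :=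
  IsWalk (Edel E v a) Q s t ∧ (pathLen Q : ℕ∞) = dist (Edel E v a) s t

/-- The triple `(s, t, e)` with `e = (v a, v (a+1))` is *long*: a replacement path exists and
every replacement path has its detour part containing more than `sqn` edges. -/
def LongTriple (E : V → V → Prop) (v : ℕ → V) (k : ℕ) (s t : V) (sqn a : ℕ) : Prop :=
  (∃ Q, IsRP E v s t a Q) ∧
    ∀ Q D, IsRP E v s t a Q → Detoured v k Q D → sqn < pathLen D

/-- `V_{√n}`: vertices `x` having an index `i ≤ k` with `d_{G'}(v i, x) = sqn` and
`d_{G'}(v j, x) > sqn` for all `j < i` (such an `i` is exactly `ρ(x)`). -/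
def Vsqrt (E : V → V → Prop) (v : ℕ → V) (k sqn : ℕ) : Set V :=
  {x | ∃ i ≤ k, dist (Eres E v k) (v i) x = (sqn : ℕ∞) ∧
      ∀ j < i, (sqn : ℕ∞) < dist (Eres E v k) (v j) x}

/-- The set of vertices `v (i+1), …, v k` deleted from `G^w` to form `G^w_i`. -/
def delVerts (v : ℕ → V) (k i : ℕ) (x : V) : Prop := ∃ l, i < l ∧ l ≤ k ∧ x = v l

/-- Edge relation of `G^w_i`: `G` with the vertices `v (i+1), …, v k` deleted. -/
def Ei (E : V → V → Prop) (v : ℕ → V) (k i : ℕ) : V → V → Prop :=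
  fun a b => E a b ∧ ¬delVerts v k i a ∧ ¬delVerts v k i b

open Classical in
/-- Weights of `G^w`: `ε` on the edges of `P`, `1` on every other edge. -/
noncomputable def wP (v : ℕ → V) (k : ℕ) (ε : ℝ) : V → V → ℝ :=
  fun a b => if ∃ i, i < k ∧ a = v i ∧ b = v (i + 1) then ε else 1

end RP

namespace RP

open List

section Infra

variable {V : Type*} {E E' : V → V → Prop} {p q : List V} {u w x x1 : V}

lemma pathLen_def (p : List V) : pathLen p = p.length - 1 := rfl

lemma IsWalk.length_pos (h : IsWalk E p u w) : 0 < p.length :=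
  List.length_pos_iff.mpr h.1

lemma IsWalk.getElem_zero (h : IsWalk E p u w) : p[0]'h.length_pos = u := by
  have h2 := h.2.1
  rw [List.head?_eq_getElem?] at h2
  simpa [List.getElem?_eq_getElem h.length_pos] using h2

lemma IsWalk.getElem_last (h : IsWalk E p u w) :
    p[p.length - 1]'(Nat.sub_lt h.length_pos Nat.one_pos) = w := by
  have h2 := h.2.2.1
  rw [List.getLast?_eq_getElem?] at h2
  have hlt : p.length - 1 < p.length := Nat.sub_lt h.length_pos Nat.one_pos
  simpa [List.getElem?_eq_getElem hlt] using h2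

lemma IsWalk.edge (h : IsWalk E p u w) {r : ℕ} (hr : r + 1 < p.length) :
    E (p[r]'(by omega)) (p[r+1]'hr) := by
  have := List.isChain_iff_getElem.mp h.2.2.2 r (by omega)
  simpa using this

lemma isWalk_of_getElem (hlen : 0 < p.length)
    (h0 : p[0]'hlen = u) (h1 : p[p.length - 1]'(Nat.sub_lt hlen Nat.one_pos) = w)
    (hc : ∀ r, (hr : r + 1 < p.length) → E (p[r]'(by omega)) (p[r+1]'hr)) :
    IsWalk E p u w := by
  refine ⟨List.length_pos_iff.mp hlen, ?_, ?_, ?_⟩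
  · rw [List.head?_eq_getElem?, List.getElem?_eq_getElem hlen, h0]
  · rw [List.getLast?_eq_getElem?,
      List.getElem?_eq_getElem (Nat.sub_lt hlen Nat.one_pos), h1]
  · exact List.isChain_iff_getElem.mpr (fun r hr => by
      have := hc r (by omega); simpa using this)

lemma IsWalk.mono (hE : ∀ a b, E a b → E' a b) (h : IsWalk E p u w) : IsWalk E' p u w :=
  ⟨h.1, h.2.1, h.2.2.1, h.2.2.2.imp hE⟩

lemma dist_le_pathLen (h : IsWalk E p u w) : dist E u w ≤ (pathLen p : ℕ∞) :=
  sInf_le ⟨p, h, rfl⟩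

lemma le_pathLen_of_dist {d : ℕ} (hd : dist E u w = (d : ℕ∞)) (h : IsWalk E p u w) :
    d ≤ pathLen p := by
  have h2 := dist_le_pathLen h
  rw [hd] at h2
  exact_mod_cast h2

lemma exists_walk_of_dist {d : ℕ} (hd : dist E u w = (d : ℕ∞)) :
    ∃ p, IsWalk E p u w ∧ pathLen p = d := by
  have hlt : dist E u w < ((d + 1 : ℕ) : ℕ∞) := by
    rw [hd]; exact_mod_cast Nat.lt_succ_self d
  obtain ⟨b, ⟨p, hp, rfl⟩, hb⟩ := sInf_lt_iff.mp hlt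
  refine ⟨p, hp, ?_⟩
  have h2 : d ≤ pathLen p := le_pathLen_of_dist hd hp
  have hb' : (pathLen p : ℕ∞) < ((d + 1 : ℕ) : ℕ∞) := hb
  have h3 : pathLen p < d + 1 := by exact_mod_cast hb'
  omega

/-- glue two walks sharing an endpoint -/
def glue (p q : List V) : List V := p ++ q.tail

lemma IsWalk.glue (h1 : IsWalk E p u x) (h2 : IsWalk E q x w) :
    IsWalk E (glue p q) u w := by
  have hp := h1.1
  have hq := h2.1
  obtain ⟨b, q', rfl⟩ : ∃ b q', q = b :: q' :=
    ⟨q.head hq, q.tail, (List.cons_head_tail hq).symm⟩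
  have hb : b = x := by
    have := h2.2.1; simpa using this
  have h1' : IsWalk E p u b := by rw [hb]; exact h1
  have hql := h2.2.2.1
  rcases q' with _ | ⟨c, q''⟩
  · have hw : b = w := by simpa using hql
    subst hw
    simpa [RP.glue] using h1'
  · refine ⟨by simp [RP.glue, hp], ?_, ?_, ?_⟩
    · rw [RP.glue, List.tail_cons, List.head?_append_of_ne_nil _ hp]
      exact h1.2.1
    · rw [RP.glue, List.tail_cons, List.getLast?_append_of_ne_nil _ (by simp)]
      simpa using hql
    · rw [RP.glue, List.tail_cons]
      change List.IsChain E _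
      rw [List.isChain_append]
      refine ⟨h1.2.2.2, (h2.2.2.2).tail, ?_⟩
      intro y hy z hz
      have hy' : b = y := by
        rw [h1'.2.2.1] at hy; simpa using hy
      have hz' : c = z := by simpa using hz
      subst hy'; subst hz'
      exact (List.isChain_cons_cons.mp h2.2.2.2).1

lemma glue_length (hp : p ≠ []) (hq : q ≠ []) :
    (glue p q).length = p.length + q.length - 1 := by
  rw [RP.glue, List.length_append, List.length_tail]
  have : 0 < q.length := List.length_pos_iff.mpr hq
  omega

lemma pathLen_glue (hp : p ≠ []) (hq : q ≠ []) :
    pathLen (glue p q) = pathLen p + pathLen q := by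
  have h0 := glue_length hp hq
  have h1 : 0 < p.length := List.length_pos_iff.mpr hp
  have h2 : 0 < q.length := List.length_pos_iff.mpr hq
  rw [pathLen, pathLen, pathLen, h0]
  omega

set_option linter.unusedVariables false in
lemma glue_eq (hpl : p.getLast? = some x) (hqh : q.head? = some x) :
    glue p q = p.dropLast ++ q := by
  have hp : p ≠ [] := by rintro rfl; simp at hpl
  have hq : q ≠ [] := by rintro rfl; simp at hqh
  have hx : p.getLast hp = x :=
    Option.some_inj.mp ((List.getLast?_eq_getLast hp).symm.trans hpl)
  have hqx : q.head hq = x :=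
    Option.some_inj.mp ((List.head?_eq_head hq).symm.trans hqh)
  rw [RP.glue]
  conv_lhs => rw [← List.dropLast_append_getLast hp]
  rw [List.append_assoc]
  congr 1
  rw [hx, ← hqx, List.singleton_append, List.cons_head_tail]

lemma IsWalk.take (h : IsWalk E p u w) {m : ℕ} (hm : m < p.length) :
    IsWalk E (p.take (m+1)) u (p[m]'hm) := by
  have hlen : (p.take (m+1)).length = m + 1 := by
    rw [List.length_take]; omega
  refine isWalk_of_getElem (by rw [hlen]; omega) ?_ ?_ ?_
  · rw [List.getElem_take]; exact h.getElem_zero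
  · have hidx : (p.take (m+1)).length - 1 = m := by rw [hlen]; omega
    simp only [hidx, List.getElem_take]
  · intro r hr
    rw [hlen] at hr
    simp only [List.getElem_take]
    exact h.edge (by omega)

lemma IsWalk.drop (h : IsWalk E p u w) {m : ℕ} (hm : m < p.length) :
    IsWalk E (p.drop m) (p[m]'hm) w := by
  have hlen : (p.drop m).length = p.length - m := by rw [List.length_drop]
  refine isWalk_of_getElem (by rw [hlen]; omega) ?_ ?_ ?_
  · simp [List.getElem_drop]
  · simp only [hlen]
    rw [List.getElem_drop]
    have hidx : m + (p.length - m - 1) = p.length - 1 := by omega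
    simp only [hidx]
    exact h.getElem_last
  · intro r hr
    rw [hlen] at hr
    simp only [List.getElem_drop]
    exact h.edge (r := m + r) (by omega)

lemma isWalk_pair (he : E x x1) : IsWalk E [x, x1] x x1 :=
  ⟨by simp, rfl, rfl, List.isChain_pair.mpr he⟩

lemma IsWalk.cons (h : IsWalk E q x1 w) (he : E x x1) : IsWalk E (x :: q) x w := by
  have h2 := (isWalk_pair he).glue h
  have hq := h.1
  have : RP.glue [x, x1] q = x :: q := by
    rw [RP.glue]
    have hh : q.head hq = x1 :=
      Option.some_inj.mp ((List.head?_eq_head hq).symm.trans h.2.1)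
    conv_rhs => rw [← List.cons_head_tail hq, hh]
    simp
  rwa [this] at h2

lemma shorter_of_not_nodup :
    ∀ (p : List V) (u w : V), IsWalk E p u w → ¬ p.Nodup →
      ∃ q, IsWalk E q u w ∧ q.length < p.length := by
  intro p
  induction p with
  | nil => intro u w h hn; exact absurd rfl h.1
  | cons a xs ih =>
    intro u w h hn
    have hu : a = u := by have := h.2.1; simpa using this
    subst hu
    by_cases hx : a ∈ xs
    · obtain ⟨B, C, rfl⟩ := List.append_of_mem hx
      refine ⟨a :: C, ⟨by simp, rfl, ?_, ?_⟩, by simp⟩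
      · have := h.2.2.1
        rw [show a :: (B ++ a :: C) = (a :: B) ++ (a :: C) by simp] at this
        rwa [List.getLast?_append_of_ne_nil _ (by simp)] at this
      · have : (a :: C) <:+: (a :: (B ++ a :: C)) :=
          ⟨a :: B, [], by simp⟩
        exact h.2.2.2.infix this
    · have hxs : ¬ xs.Nodup := by
        intro hnd; exact hn (List.nodup_cons.mpr ⟨hx, hnd⟩)
      have hxsne : xs ≠ [] := by rintro rfl; simp at hxs
      have hlen : 1 < (a :: xs).length := by
        simp [List.length_pos_iff.mpr hxsne]
      have hdrop := h.drop (m := 1) hlen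
      simp only [List.drop_one, List.tail_cons] at hdrop
      obtain ⟨q, hq, hqlt⟩ := ih _ _ hdrop hxs
      have he : E a ((a :: xs)[1]'hlen) := h.edge hlen
      exact ⟨a :: q, hq.cons he, by simpa using Nat.succ_lt_succ hqlt⟩

lemma nodup_of_shortest (h : IsWalk E p u w) (hd : (pathLen p : ℕ∞) = dist E u w) :
    p.Nodup := by
  by_contra hnd
  obtain ⟨q, hq, hlt⟩ := shorter_of_not_nodup p u w h hnd
  have h2 : pathLen p ≤ pathLen q := le_pathLen_of_dist hd.symm hq
  have h3 := hq.length_pos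
  rw [pathLen, pathLen] at h2
  omega

lemma walk_range' (v : ℕ → V) (i len : ℕ)
    (h : ∀ c, i ≤ c → c < i + len → E (v c) (v (c+1))) :
    IsWalk E ((List.range' i (len+1)).map v) (v i) (v (i+len)) := by
  have hlen : ((List.range' i (len+1)).map v).length = len + 1 := by simp
  refine isWalk_of_getElem (by rw [hlen]; omega) ?_ ?_ ?_
  · simp
  · simp only [hlen, Nat.add_sub_cancel, List.getElem_map, List.getElem_range', one_mul]
  · intro r hr
    rw [hlen] at hr
    simp only [List.getElem_map, List.getElem_range', one_mul]
    exact h (i + r) (by omega) (by omega)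

lemma getElem_congr_idx {l : List V} {i j : ℕ} (h : i = j) {hi : i < l.length} :
    l[i] = l[j]'(h ▸ hi) := by subst h; rfl

lemma getElem_triple_left {A B C : List V} {p : ℕ} (hp : p < A.length)
    {h : p < (A ++ B ++ C).length} : (A ++ B ++ C)[p] = A[p] := by
  rw [List.getElem_append_left (by rw [List.length_append]; omega),
      List.getElem_append_left hp]

lemma getElem_triple_mid {A B C : List V} {r : ℕ} (hr : r < B.length)
    {h : A.length + r < (A ++ B ++ C).length} : (A ++ B ++ C)[A.length + r] = B[r] := by
  rw [List.getElem_append_left (as := A ++ B) (bs := C) (by rw [List.length_append]; omega),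
      List.getElem_append_right (by omega)]
  exact getElem_congr_idx (by omega)

lemma getElem_triple_right {A B C : List V} {c : ℕ} (hc : c < C.length)
    {h : A.length + B.length + c < (A ++ B ++ C).length} :
    (A ++ B ++ C)[A.length + B.length + c] = C[c] := by
  rw [List.getElem_append_right (by rw [List.length_append]; omega)]
  exact getElem_congr_idx (by rw [List.length_append]; omega)

lemma getLast?_drop_of_lt {l : List V} {m : ℕ} (hm : m < l.length) :
    (l.drop m).getLast? = l.getLast? := by
  rw [List.getLast?_eq_getElem?, List.getLast?_eq_getElem? (l := l)]
  rw [List.getElem?_eq_getElem (l := l.drop m) (by rw [List.length_drop]; omega)]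
  rw [List.getElem?_eq_getElem (l := l) (by omega : l.length - 1 < l.length)]
  rw [List.getElem_drop]
  exact congrArg some (getElem_congr_idx (by rw [List.length_drop]; omega))

lemma head?_getElem {B : List V} {z : V} (h : B.head? = some z) (hB : 0 < B.length) :
    B[0] = z := by
  rw [List.head?_eq_getElem?, List.getElem?_eq_getElem hB] at h
  simpa using h

lemma getLast?_getElem {B : List V} {z : V} (h : B.getLast? = some z) (hB : 0 < B.length) :
    B[B.length - 1]'(by omega) = z := by
  rw [List.getLast?_eq_getElem?, List.getElem?_eq_getElem (by omega : B.length - 1 < B.length)] at h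
  simpa using h

lemma dropLast_seg (v : ℕ → V) (i len : ℕ) :
    ((List.range' i (len+1)).map v).dropLast = (List.range' i len).map v := by
  rw [List.range'_concat]
  simp

lemma tail_seg (v : ℕ → V) (i len : ℕ) :
    ((List.range' i (len+1)).map v).tail = (List.range' (i+1) len).map v := by
  rw [List.range'_succ]
  simp

lemma seg_getLast? (v : ℕ → V) (i len : ℕ) :
    ((List.range' i (len+1)).map v).getLast? = some (v (i+len)) :=
  (walk_range' (E := fun _ _ => True) v i len (fun _ _ _ => trivial)).2.2.1

end Infra

section Decomp

variable {V : Type*} {E : V → V → Prop} {v : ℕ → V} {k a : ℕ} {s t : V}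

lemma decomp_getElem {i' j' : ℕ} {Q' B : List V}
    (heq : Q' = ((List.range i').map v) ++ B ++ ((List.range' (j'+1) (k-j')).map v)) :
    Q'.length = i' + B.length + (k - j') ∧
    (∀ p, (hp : p < i') → Q'[p]'(by rw [heq]; simp; omega) = v p) ∧
    (∀ r, (hr : r < B.length) → Q'[i' + r]'(by rw [heq]; simp; omega) = B[r]) ∧
    (∀ c, (hc : c < k - j') → Q'[i' + B.length + c]'(by rw [heq]; simp; omega) = v (j'+1+c)) := by
  subst heq
  refine ⟨by simp [Nat.add_assoc], ?_, ?_, ?_⟩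
  · intro p hp
    rw [getElem_triple_left (by simpa using hp)]
    simp
  · intro r hr
    rw [getElem_congr_idx (show i' + r = ((List.range i').map v).length + r by simp)]
    exact getElem_triple_mid hr
  · intro c hc
    rw [getElem_congr_idx
      (show i' + B.length + c = ((List.range i').map v).length + B.length + c by simp)]
    rw [getElem_triple_right (by simpa using hc)]
    simp

lemma decomp_start_le (ha : a < k) {i' j' : ℕ} {Q' B : List V}
    (hQ' : IsWalk (Edel E v a) Q' s t)
    (heq : Q' = ((List.range i').map v) ++ B ++ ((List.range' (j'+1) (k-j')).map v))
    (hhd : B.head? = some (v i')) (hlst : B.getLast? = some (v j')) :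
    i' ≤ a ∧ a < j' := by
  obtain ⟨hlen, hleft, hmid, hright⟩ := decomp_getElem heq
  have hBne : B ≠ [] := by rintro rfl; simp at hhd
  have hBpos : 0 < B.length := List.length_pos_iff.mpr hBne
  have hB0 : B[0] = v i' := head?_getElem hhd hBpos
  have hBL : B[B.length - 1]'(by omega) = v j' := getLast?_getElem hlst hBpos
  constructor
  · by_contra hcon
    push_neg at hcon
    have hedge := hQ'.edge (r := a) (by omega)
    refine hedge.2 ⟨?_, ?_⟩
    · exact hleft a (by omega)
    · rcases Nat.lt_or_ge (a+1) i' with h | h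
      · exact hleft (a+1) h
      · have h2 : a + 1 = i' := by omega
        rw [getElem_congr_idx (show a + 1 = i' + 0 by omega), hmid 0 hBpos, hB0, h2]
  · by_contra hcon
    push_neg at hcon
    have hedge := hQ'.edge (r := i' + (B.length - 1) + (a - j')) (by omega)
    refine hedge.2 ⟨?_, ?_⟩
    · rcases Nat.eq_or_lt_of_le hcon with h | h
      · rw [getElem_congr_idx (show i' + (B.length - 1) + (a - j') = i' + (B.length - 1) by omega),
          hmid (B.length - 1) (by omega), hBL, h]
      · rw [getElem_congr_idx
          (show i' + (B.length - 1) + (a - j') = i' + B.length + (a - j' - 1) by omega),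
          hright (a - j' - 1) (by omega)]
        congr 1
        omega
    · rw [getElem_congr_idx
        (show i' + (B.length - 1) + (a - j') + 1 = i' + B.length + (a - j') by omega),
        hright (a - j') (by omega)]
      congr 1
      omega

lemma v_inj (hs : v 0 = s) (ht : v k = t)
    (hEdge : ∀ c, c < k → E (v c) (v (c+1)))
    (hGb : ∀ p, IsWalk E p s t → k ≤ pathLen p) :
    ∀ i, i ≤ k → ∀ j, j ≤ k → v i = v j → i = j := by
  suffices key : ∀ i j, i < j → j ≤ k → v i ≠ v j by
    intro i hi j hj hij
    rcases lt_trichotomy i j with h | h | h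
    · exact absurd hij (key i j h hj)
    · exact h
    · exact absurd hij.symm (key j i h hi)
  intro i j hij hjk hvij
  have w1 : IsWalk E ((List.range' 0 (i+1)).map v) (v 0) (v (0+i)) :=
    walk_range' v 0 i (fun c h1 h2 => hEdge c (by omega))
  have w2 : IsWalk E ((List.range' j (k-j+1)).map v) (v j) (v (j+(k-j))) :=
    walk_range' v j (k-j) (fun c h1 h2 => hEdge c (by omega))
  rw [show (0:ℕ) + i = i from by omega, hvij, hs] at w1
  rw [show j + (k - j) = k from by omega, ht] at w2
  have hW := w1.glue w2
  have hb := hGb _ hW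
  rw [pathLen_glue w1.1 w2.1] at hb
  have l1 : pathLen ((List.range' 0 (i+1)).map v) = i := by simp [pathLen_def]
  have l2 : pathLen ((List.range' j (k-j+1)).map v) = k - j := by simp [pathLen_def]
  rw [l1, l2] at hb
  omega

end Decomp

end RP
namespace RP

set_option maxHeartbeats 1000000 in
lemma main {V : Type*} (E : V → V → Prop) (v : ℕ → V) (k a sqn : ℕ) (s t : V)
    (hs : v 0 = s) (ht : v k = t)
    (hEdge : ∀ c, c < k → E (v c) (v (c+1)))
    (hGb : ∀ p, IsWalk E p s t → k ≤ pathLen p)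
    (hv : ∀ i, i ≤ k → ∀ j, j ≤ k → v i = v j → i = j)
    (ha : a < k) (hsqn1 : 1 ≤ sqn)
    (D : V → List V)
    (hD : ∀ x ∈ Vsqrt E v k sqn, ∃ i ≤ k,
        (∀ j < i, (sqn : ℕ∞) < dist (Eres E v k) (v j) x) ∧
        dist (Eres E v k) (v i) x = (sqn : ℕ∞) ∧
        IsWalk (Eres E v k) (D x) (v i) x ∧ pathLen (D x) = sqn)
    (hDec : ∀ Q, IsRP E v s t a Q → ∃ Dt, Detoured v k Q Dt)
    (hLong2 : ∀ Q Dt, IsRP E v s t a Q → Detoured v k Q Dt → sqn < pathLen Dt) :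
    ∀ N i0, a - i0 ≤ N → ∀ Q Dt j0,
      IsRP E v s t a Q → i0 ≤ k → j0 ≤ k →
      Q = ((List.range i0).map v) ++ Dt ++ ((List.range' (j0+1) (k-j0)).map v) →
      Dt.head? = some (v i0) → Dt.getLast? = some (v j0) →
      (∀ x ∈ Dt, onPath v k x → x = v i0 ∨ x = v j0) →
      ∃ x ∈ Vsqrt E v k sqn, ∃ P' Dt' : List V,
        IsWalk (Edel E v a) P' s t ∧
        (pathLen P' : ℕ∞) = dist (Edel E v a) s t ∧
        Detoured v k P' Dt' ∧ D x <:+: Dt' := by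
  have hEres_del : ∀ x y, Eres E v k x y → Edel E v a x y :=
    fun x y h => ⟨h.1, fun hc => h.2 ⟨a, ha, hc.1, hc.2⟩⟩
  have hdel_E : ∀ x y, Edel E v a x y → E x y := fun _ _ h => h.1
  have hEres_E : ∀ x y, Eres E v k x y → E x y := fun _ _ h => h.1
  have segDel : ∀ i len, i + len ≤ k → (∀ c, i ≤ c → c < i + len → c ≠ a) →
      IsWalk (Edel E v a) ((List.range' i (len+1)).map v) (v i) (v (i+len)) := by
    intro i len hlen hne
    refine walk_range' v i len (fun c h1 h2 => ⟨hEdge c (by omega), ?_⟩)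
    rintro ⟨e1, -⟩
    exact hne c h1 h2 (hv c (by omega) a (by omega) e1)
  have segE : ∀ i len, i + len ≤ k →
      IsWalk E ((List.range' i (len+1)).map v) (v i) (v (i+len)) :=
    fun i len hlen => walk_range' v i len (fun c h1 h2 => hEdge c (by omega))
  intro N
  induction N using Nat.strong_induction_on with
  | _ N ih =>
  intro i0 hN Q Dt j0 hRP hi0k hj0k hQeq hDthead hDtlast hDtavoid
  obtain ⟨hQ, hQd⟩ := hRP
  have hQbound : ∀ W, IsWalk (Edel E v a) W s t → pathLen Q ≤ pathLen W :=
    fun W hW => le_pathLen_of_dist hQd.symm hW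
  have hQnd : Q.Nodup := nodup_of_shortest hQ hQd
  have hDtne : Dt ≠ [] := by rintro rfl; simp at hDthead
  have hLDpos : 0 < Dt.length := List.length_pos_iff.mpr hDtne
  have hDt0 : Dt[0] = v i0 := head?_getElem hDthead hLDpos
  have hDtL : Dt[Dt.length - 1]'(by omega) = v j0 := getLast?_getElem hDtlast hLDpos
  obtain ⟨hQlen, hQleft, hQmid, hQright⟩ := decomp_getElem (k := k) hQeq
  have hQinj : ∀ p1 p2, (h1 : p1 < Q.length) → (h2 : p2 < Q.length) →
      Q[p1] = Q[p2] → p1 = p2 :=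
    fun p1 p2 h1 h2 he => (List.Nodup.getElem_inj_iff hQnd).mp he
  obtain ⟨hi0a, hj0a⟩ := decomp_start_le ha hQ hQeq hDthead hDtlast
  have hDetoured : Detoured v k Q Dt :=
    ⟨i0, j0, hi0k, hj0k, hQeq, hDthead, hDtlast, hDtavoid⟩
  have hLsqn : sqn < pathLen Dt := hLong2 Q Dt ⟨hQ, hQd⟩ hDetoured
  have hsqnLD : sqn + 1 < Dt.length := by rw [pathLen_def] at hLsqn; omega
  have lQ : pathLen Q = i0 + (Dt.length - 1) + (k - j0) := by
    rw [pathLen_def, hQlen]; omega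
  obtain ⟨y, hy⟩ : ∃ z, Dt[sqn]'(by omega) = z := ⟨_, rfl⟩
  have hymem : y ∈ Dt := hy ▸ List.getElem_mem _
  have hDtwalk : IsWalk (Edel E v a) Dt (v i0) (v j0) :=
    ⟨hDtne, hDthead, hDtlast, hQ.2.2.2.infix
      ⟨(List.range i0).map v, (List.range' (j0+1) (k-j0)).map v, hQeq.symm⟩⟩
  -- the first sqn edges of Dt avoid all edges of P
  have hDtEres : ∀ r, (hr : r < sqn) → Eres E v k (Dt[r]'(by omega)) (Dt[r+1]'(by omega)) := by
    intro r hr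
    have hedge := hDtwalk.edge (r := r) (by omega)
    refine ⟨hedge.1, ?_⟩
    rintro ⟨c, hck, hc1, hc2⟩
    have hmem : Dt[r]'(by omega) ∈ Dt := List.getElem_mem _
    rcases hDtavoid _ hmem ⟨c, le_of_lt hck, hc1⟩ with h | h
    · have hr0 : r = 0 := by
        have e1 : Q[i0 + r]'(by omega) = Q[i0 + 0]'(by omega) := by
          rw [hQmid r (by omega), hQmid 0 hLDpos, hDt0, h]
        have := hQinj _ _ (by omega) (by omega) e1
        omega
      subst hr0
      have hci0 : c = i0 := hv c (by omega) i0 hi0k (by rw [← hc1, h])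
      have h1mem : Dt[1]'(by omega) ∈ Dt := List.getElem_mem _
      rcases hDtavoid _ h1mem ⟨c+1, by omega, hc2⟩ with h2 | h2
      · have : c + 1 = i0 := hv (c+1) (by omega) i0 hi0k (by rw [← hc2, h2])
        omega
      · have e1 : Q[i0 + 1]'(by omega) = Q[i0 + (Dt.length - 1)]'(by omega) := by
          rw [hQmid 1 (by omega), hQmid (Dt.length - 1) (by omega), hDtL, h2]
        have := hQinj _ _ (by omega) (by omega) e1
        omega
    · have e1 : Q[i0 + r]'(by omega) = Q[i0 + (Dt.length - 1)]'(by omega) := by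
        rw [hQmid r (by omega), hQmid (Dt.length - 1) (by omega), hDtL, h]
      have := hQinj _ _ (by omega) (by omega) e1
      omega
  -- dist in G' from v i0 to y is exactly sqn, and > sqn from earlier vertices
  have hB1 : IsWalk (Eres E v k) (Dt.take (sqn+1)) (v i0) y := by
    have hlen : (Dt.take (sqn+1)).length = sqn + 1 := by rw [List.length_take]; omega
    refine isWalk_of_getElem (by rw [hlen]; omega) ?_ ?_ ?_
    · rw [List.getElem_take]; exact hDt0
    · rw [getElem_congr_idx (show (Dt.take (sqn+1)).length - 1 = sqn by rw [hlen]; omega),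
        List.getElem_take]
      exact hy
    · intro r hr
      rw [hlen] at hr
      simp only [List.getElem_take]
      exact hDtEres r (by omega)
  have hdistyle : dist (Eres E v k) (v i0) y ≤ (sqn : ℕ∞) := by
    have h2 := dist_le_pathLen hB1
    have hpl : pathLen (Dt.take (sqn+1)) = sqn := by
      rw [pathLen_def, List.length_take]; omega
    rwa [hpl] at h2
  have hlower : ∀ j, j ≤ i0 → ((sqn + (i0 - j) : ℕ) : ℕ∞) ≤ dist (Eres E v k) (v j) y := by
    intro j hj
    rcases eq_or_ne (dist (Eres E v k) (v j) y) ⊤ with htop | htop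
    · rw [htop]; exact le_top
    · obtain ⟨m', hm'⟩ := WithTop.ne_top_iff_exists.mp htop
      obtain ⟨R, hR, hRlen⟩ := exists_walk_of_dist hm'.symm
      have w1 : IsWalk (Edel E v a) ((List.range' 0 (j+1)).map v) s (v j) := by
        have := segDel 0 j (by omega) (fun c h1 h2 => by omega)
        simpa only [hs, Nat.zero_add] using this
      have w2 : IsWalk (Edel E v a) R (v j) y := hR.mono hEres_del
      have w3 : IsWalk (Edel E v a) (Dt.drop sqn) y (v j0) := by
        have := hDtwalk.drop (show sqn < Dt.length by omega)
        rwa [hy] at this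
      have w4 : IsWalk (Edel E v a) ((List.range' j0 (k-j0+1)).map v) (v j0) t := by
        have := segDel j0 (k-j0) (by omega) (fun c h1 h2 => by omega)
        rwa [Nat.add_sub_cancel' hj0k, ht] at this
      have wAll := ((w1.glue w2).glue w3).glue w4
      have hb := hQbound _ wAll
      rw [pathLen_glue ((w1.glue w2).glue w3).1 w4.1,
          pathLen_glue (w1.glue w2).1 w3.1,
          pathLen_glue w1.1 w2.1] at hb
      rw [show pathLen ((List.range' 0 (j+1)).map v) = j from by simp [pathLen_def],
          hRlen,
          show pathLen (Dt.drop sqn) = Dt.length - 1 - sqn from by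
            rw [pathLen_def, List.length_drop]; omega,
          show pathLen ((List.range' j0 (k-j0+1)).map v) = k - j0 from by simp [pathLen_def],
          lQ] at hb
      have hm2 : dist (Eres E v k) (v j) y = ((m' : ℕ) : ℕ∞) := by
        rw [← hm']; rfl
      rw [hm2]
      exact Nat.cast_le.mpr (by omega)
  have hIy : dist (Eres E v k) (v i0) y = (sqn : ℕ∞) := by
    refine le_antisymm hdistyle ?_
    have := hlower i0 le_rfl
    simpa using this
  have hJy : ∀ j, j < i0 → (sqn : ℕ∞) < dist (Eres E v k) (v j) y := by
    intro j hj
    refine lt_of_lt_of_le ?_ (hlower j (by omega))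
    exact_mod_cast (by omega : sqn < sqn + (i0 - j))
  have hyV : y ∈ Vsqrt E v k sqn := ⟨i0, hi0k, hIy, fun j hj => hJy j hj⟩
  obtain ⟨i, hik, himin, hidist, hDyW0, hDylen⟩ := hD y hyV
  have hii0 : i = i0 := by
    rcases lt_trichotomy i i0 with h | h | h
    · have := hJy i h
      rw [hidist] at this
      exact absurd this (lt_irrefl _)
    · exact h
    · have := himin i0 h
      rw [hIy] at this
      exact absurd this (lt_irrefl _)
  have hDyW : IsWalk (Eres E v k) (D y) (v i0) y := by rw [← hii0]; exact hDyW0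
  have hDyne : D y ≠ [] := hDyW.1
  have hDyLen : (D y).length = sqn + 1 := by
    have := hDyW.length_pos; rw [pathLen_def] at hDylen; omega
  have hDy0 : (D y)[0]'(by omega) = v i0 := hDyW.getElem_zero
  have hDyLast : (D y)[sqn]'(by omega) = y := by
    have h2 := hDyW.getElem_last
    rwa [getElem_congr_idx (show (D y).length - 1 = sqn by omega)] at h2
  by_cases hbad : ∃ m l, 0 < m ∧ m < sqn ∧ l ≤ k ∧ (D y)[m]? = some (v l) ∧ l ≠ i0 ∧ l ≠ j0
  · -- a bad internal hit of the path D y on P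
    obtain ⟨m, l, hm0, hmsqn, hlk, hmlopt, hli0, hlj0⟩ := hbad
    have hmD : m < (D y).length := by omega
    have hml : (D y)[m]'hmD = v l := by
      rw [List.getElem?_eq_getElem hmD] at hmlopt
      simpa using hmlopt
    rcases Nat.lt_or_ge l i0 with hl1 | hl1
    · -- hit before i0: contradicts minimality
      exfalso
      have wdrop : IsWalk (Eres E v k) ((D y).drop m) (v l) y := by
        have h2 := hDyW.drop hmD
        rwa [hml] at h2
      have hle := dist_le_pathLen wdrop
      rw [show pathLen ((D y).drop m) = sqn - m from by
        rw [pathLen_def, List.length_drop]; omega] at hle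
      have h3 := lt_of_lt_of_le (hJy l hl1) hle
      have h4 : sqn < sqn - m := by exact_mod_cast h3
      omega
    · have hl2 : i0 < l := lt_of_le_of_ne hl1 (Ne.symm hli0)
      rcases le_or_gt l a with hla | hla
      · -- i0 < l ≤ a : extend the common prefix and recurse
        have u1 : IsWalk E ((List.range' 0 (i0+1)).map v) s (v i0) := by
          have := segE 0 i0 (by omega)
          simpa only [hs, Nat.zero_add] using this
        have u2 : IsWalk E ((D y).take (m+1)) (v i0) (v l) := by
          have h2 := (hDyW.take hmD).mono hEres_E
          rwa [hml] at h2
        have u3 : IsWalk E ((List.range' l (k-l+1)).map v) (v l) t := by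
          have := segE l (k-l) (by omega)
          rwa [Nat.add_sub_cancel' (by omega : l ≤ k), ht] at this
        have hU := (u1.glue u2).glue u3
        have hUb := hGb _ hU
        rw [pathLen_glue (u1.glue u2).1 u3.1, pathLen_glue u1.1 u2.1,
          show pathLen ((List.range' 0 (i0+1)).map v) = i0 from by simp [pathLen_def],
          show pathLen ((D y).take (m+1)) = m from by
            rw [pathLen_def, List.length_take]; omega,
          show pathLen ((List.range' l (k-l+1)).map v) = k - l from by simp [pathLen_def]]
          at hUb
        -- the walk W2
        have w1 : IsWalk (Edel E v a) ((List.range' 0 (l+1)).map v) s (v l) := by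
          have := segDel 0 l (by omega) (fun c h1 h2 => by omega)
          simpa only [hs, Nat.zero_add] using this
        have w2 : IsWalk (Edel E v a) ((D y).drop m) (v l) y := by
          have h2 := (hDyW.drop hmD).mono hEres_del
          rwa [hml] at h2
        have w3 : IsWalk (Edel E v a) (Dt.drop sqn) y (v j0) := by
          have := hDtwalk.drop (show sqn < Dt.length by omega)
          rwa [hy] at this
        have w4 : IsWalk (Edel E v a) ((List.range' j0 (k-j0+1)).map v) (v j0) t := by
          have := segDel j0 (k-j0) (by omega) (fun c h1 h2 => by omega)
          rwa [Nat.add_sub_cancel' hj0k, ht] at this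
        have hW2w := ((w1.glue w2).glue w3).glue w4
        have hW2len : pathLen (RP.glue (RP.glue (RP.glue ((List.range' 0 (l+1)).map v)
            ((D y).drop m)) (Dt.drop sqn)) ((List.range' j0 (k-j0+1)).map v))
            = l + (sqn - m) + (Dt.length - 1 - sqn) + (k - j0) := by
          rw [pathLen_glue ((w1.glue w2).glue w3).1 w4.1,
            pathLen_glue (w1.glue w2).1 w3.1,
            pathLen_glue w1.1 w2.1,
            show pathLen ((List.range' 0 (l+1)).map v) = l from by simp [pathLen_def],
            show pathLen ((D y).drop m) = sqn - m from by
              rw [pathLen_def, List.length_drop]; omega,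
            show pathLen (Dt.drop sqn) = Dt.length - 1 - sqn from by
              rw [pathLen_def, List.length_drop]; omega,
            show pathLen ((List.range' j0 (k-j0+1)).map v) = k - j0 from by
              simp [pathLen_def]]
        have hW2b := hQbound _ hW2w
        rw [hW2len, lQ] at hW2b
        have hleq : l = i0 + m := by omega
        -- canonical form
        have hW2eqL : RP.glue (RP.glue (RP.glue ((List.range' 0 (l+1)).map v)
            ((D y).drop m)) (Dt.drop sqn)) ((List.range' j0 (k-j0+1)).map v)
            = ((List.range l).map v) ++ (((D y).drop m) ++ Dt.drop (sqn+1))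
              ++ ((List.range' (j0+1) (k-j0)).map v) := by
          rw [glue_eq (p := (List.range' 0 (l+1)).map v)
            (by simpa only [Nat.zero_add] using seg_getLast? v 0 l) w2.2.1]
          rw [RP.glue, RP.glue, dropLast_seg, List.tail_drop, tail_seg]
          simp [List.append_assoc, List.range_eq_range']
        rw [hW2eqL] at hW2w hW2len
        have hW2rp : IsRP E v s t a (((List.range l).map v)
            ++ (((D y).drop m) ++ Dt.drop (sqn+1)) ++ ((List.range' (j0+1) (k-j0)).map v)) := by
          refine ⟨hW2w, ?_⟩
          rw [show pathLen (((List.range l).map v) ++ (((D y).drop m) ++ Dt.drop (sqn+1))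
            ++ ((List.range' (j0+1) (k-j0)).map v)) = pathLen Q from by
              rw [hW2len, lQ]; omega]
          exact hQd
        obtain ⟨Dt'', hDt''⟩ := hDec _ hW2rp
        obtain ⟨i', j', hi'k, hj'k, hW2eq2, hhd2, hlst2, havoid2⟩ := hDt''
        have hsq2 : sqn < pathLen Dt'' := hLong2 _ Dt'' hW2rp
          ⟨i', j', hi'k, hj'k, hW2eq2, hhd2, hlst2, havoid2⟩
        have hW2nd : (((List.range l).map v) ++ (((D y).drop m) ++ Dt.drop (sqn+1))
            ++ ((List.range' (j0+1) (k-j0)).map v)).Nodup :=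
          nodup_of_shortest hW2w hW2rp.2
        have hDt''ne : Dt'' ≠ [] := by rintro rfl; simp at hhd2
        have hDt''pos : 0 < Dt''.length := List.length_pos_iff.mpr hDt''ne
        have hr2 : 2 < Dt''.length := by rw [pathLen_def] at hsq2; omega
        have hDt''0 : Dt''[0] = v i' := head?_getElem hhd2 hDt''pos
        have hDt''L : Dt''[Dt''.length - 1]'(by omega) = v j' := getLast?_getElem hlst2 hDt''pos
        obtain ⟨hW2len2, hW2left2, hW2mid2, hW2right2⟩ := decomp_getElem (k := k) hW2eq2
        obtain ⟨hW2clen, hW2cleft, hW2cmid, hW2cright⟩ := decomp_getElem (k := k)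
          (rfl : ((List.range l).map v) ++ (((D y).drop m) ++ Dt.drop (sqn+1))
            ++ ((List.range' (j0+1) (k-j0)).map v) = _)
        have hBBlen : (((D y).drop m) ++ Dt.drop (sqn+1)).length
            = (sqn - m + 1) + (Dt.length - (sqn+1)) := by
          rw [List.length_append, List.length_drop, List.length_drop]; omega
        -- interior of Dt'' avoids P
        have hint : ∀ q, (hq1 : 0 < q) → (hq2 : q < Dt''.length - 1) →
            ¬ onPath v k (Dt''[q]'(by omega)) := by
          intro q hq1 hq2 hon
          rcases havoid2 _ (List.getElem_mem _) hon with h | h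
          · have e1 : (((List.range l).map v) ++ (((D y).drop m) ++ Dt.drop (sqn+1))
                ++ ((List.range' (j0+1) (k-j0)).map v))[i' + q]'(by omega)
                = (((List.range l).map v) ++ (((D y).drop m) ++ Dt.drop (sqn+1))
                ++ ((List.range' (j0+1) (k-j0)).map v))[i' + 0]'(by omega) := by
              rw [hW2mid2 q (by omega), hW2mid2 0 (by omega), hDt''0, h]
            have := (List.Nodup.getElem_inj_iff hW2nd).mp e1
            omega
          · have e1 : (((List.range l).map v) ++ (((D y).drop m) ++ Dt.drop (sqn+1))
                ++ ((List.range' (j0+1) (k-j0)).map v))[i' + q]'(by omega)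
                = (((List.range l).map v) ++ (((D y).drop m) ++ Dt.drop (sqn+1))
                ++ ((List.range' (j0+1) (k-j0)).map v))[i' + (Dt''.length - 1)]'(by omega) := by
              rw [hW2mid2 q (by omega), hW2mid2 (Dt''.length - 1) (by omega), hDt''L, h]
            have := (List.Nodup.getElem_inj_iff hW2nd).mp e1
            omega
        -- positions ≤ l hold vertices of P
        have hposW2 : ∀ p, (hp : p < (((List.range l).map v) ++ (((D y).drop m)
            ++ Dt.drop (sqn+1)) ++ ((List.range' (j0+1) (k-j0)).map v)).length) → p ≤ l →
            onPath v k ((((List.range l).map v) ++ (((D y).drop m) ++ Dt.drop (sqn+1))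
            ++ ((List.range' (j0+1) (k-j0)).map v))[p]'hp) := by
          intro p hp hpl
          rcases Nat.lt_or_ge p l with h | h
          · refine ⟨p, by omega, ?_⟩
            rw [hW2cleft p h]
          · refine ⟨l, by omega, ?_⟩
            rw [getElem_congr_idx (show p = l + 0 by omega), hW2cmid 0 (by rw [hBBlen]; omega)]
            rw [List.getElem_append_left (by rw [List.length_drop]; omega),
              List.getElem_drop]
            rw [getElem_congr_idx (show m + 0 = m by omega)]
            exact hml
        -- the new detour starts strictly after l
        have hil : l < i' + 1 := by
          by_contra hcon
          push_neg at hcon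
          have honp := hposW2 (i' + 1) (by omega) (by omega)
          rw [hW2mid2 1 (by omega)] at honp
          exact hint 1 (by omega) (by omega) honp
        obtain ⟨hi'a, hj'a⟩ := decomp_start_le ha hW2w hW2eq2 hhd2 hlst2
        exact ih (a - i') (by omega) i' le_rfl _ Dt'' j' hW2rp hi'k hj'k hW2eq2 hhd2 hlst2 havoid2
      · -- a < l : contradiction with the triple being long
        exfalso
        have w1 : IsWalk (Edel E v a) ((List.range' 0 (i0+1)).map v) s (v i0) := by
          have := segDel 0 i0 (by omega) (fun c h1 h2 => by omega)
          simpa only [hs, Nat.zero_add] using this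
        have w2 : IsWalk (Edel E v a) ((D y).take (m+1)) (v i0) (v l) := by
          have h2 := (hDyW.take hmD).mono hEres_del
          rwa [hml] at h2
        have w3 : IsWalk (Edel E v a) ((List.range' l (k-l+1)).map v) (v l) t := by
          have := segDel l (k-l) (by omega) (fun c h1 h2 => by omega)
          rwa [Nat.add_sub_cancel' (by omega : l ≤ k), ht] at this
        have hW3w := (w1.glue w2).glue w3
        have hW3len : pathLen (RP.glue (RP.glue ((List.range' 0 (i0+1)).map v)
            ((D y).take (m+1))) ((List.range' l (k-l+1)).map v)) = i0 + m + (k - l) := by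
          rw [pathLen_glue (w1.glue w2).1 w3.1, pathLen_glue w1.1 w2.1,
            show pathLen ((List.range' 0 (i0+1)).map v) = i0 from by simp [pathLen_def],
            show pathLen ((D y).take (m+1)) = m from by
              rw [pathLen_def, List.length_take]; omega,
            show pathLen ((List.range' l (k-l+1)).map v) = k - l from by simp [pathLen_def]]
        have hW3b := hQbound _ hW3w
        rw [hW3len, lQ] at hW3b
        -- lower bound via a walk in G
        have u1 : IsWalk E ((List.range' 0 (l+1)).map v) s (v l) := by
          have := segE 0 l (by omega)
          simpa only [hs, Nat.zero_add] using this
        have u2 : IsWalk E ((D y).drop m) (v l) y := by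
          have h2 := (hDyW.drop hmD).mono hEres_E
          rwa [hml] at h2
        have u3 : IsWalk E (Dt.drop sqn) y (v j0) := by
          have := (hDtwalk.drop (show sqn < Dt.length by omega)).mono hdel_E
          rwa [hy] at this
        have u4 : IsWalk E ((List.range' j0 (k-j0+1)).map v) (v j0) t := by
          have := segE j0 (k-j0) (by omega)
          rwa [Nat.add_sub_cancel' hj0k, ht] at this
        have hU := ((u1.glue u2).glue u3).glue u4
        have hUb := hGb _ hU
        rw [pathLen_glue ((u1.glue u2).glue u3).1 u4.1,
          pathLen_glue (u1.glue u2).1 u3.1,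
          pathLen_glue u1.1 u2.1,
          show pathLen ((List.range' 0 (l+1)).map v) = l from by simp [pathLen_def],
          show pathLen ((D y).drop m) = sqn - m from by
            rw [pathLen_def, List.length_drop]; omega,
          show pathLen (Dt.drop sqn) = Dt.length - 1 - sqn from by
            rw [pathLen_def, List.length_drop]; omega,
          show pathLen ((List.range' j0 (k-j0+1)).map v) = k - j0 from by simp [pathLen_def]]
          at hUb
        -- W3 canonical form, is a replacement path
        have hW3eqL : RP.glue (RP.glue ((List.range' 0 (i0+1)).map v)
            ((D y).take (m+1))) ((List.range' l (k-l+1)).map v)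
            = ((List.range i0).map v) ++ ((D y).take (m+1))
              ++ ((List.range' (l+1) (k-l)).map v) := by
          rw [glue_eq (p := (List.range' 0 (i0+1)).map v)
            (by simpa only [Nat.zero_add] using seg_getLast? v 0 i0) w2.2.1]
          rw [RP.glue, dropLast_seg, tail_seg]
          simp [List.append_assoc, List.range_eq_range']
        rw [hW3eqL] at hW3w hW3len
        have hW3rp : IsRP E v s t a (((List.range i0).map v) ++ ((D y).take (m+1))
            ++ ((List.range' (l+1) (k-l)).map v)) := by
          refine ⟨hW3w, ?_⟩
          rw [show pathLen (((List.range i0).map v) ++ ((D y).take (m+1))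
            ++ ((List.range' (l+1) (k-l)).map v)) = pathLen Q from by
              rw [hW3len, lQ]; omega]
          exact hQd
        obtain ⟨Dt'', hDt''⟩ := hDec _ hW3rp
        obtain ⟨i', j', hi'k3, hj'k3, hW3eq2, hhd3, hlst3, havoid3⟩ := hDt''
        have hsq3 : sqn < pathLen Dt'' := hLong2 _ Dt'' hW3rp
          ⟨i', j', hi'k3, hj'k3, hW3eq2, hhd3, hlst3, havoid3⟩
        have hW3nd : (((List.range i0).map v) ++ ((D y).take (m+1))
            ++ ((List.range' (l+1) (k-l)).map v)).Nodup :=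
          nodup_of_shortest hW3w hW3rp.2
        have hDt''ne : Dt'' ≠ [] := by rintro rfl; simp at hhd3
        have hDt''pos : 0 < Dt''.length := List.length_pos_iff.mpr hDt''ne
        have hr3 : 2 < Dt''.length := by rw [pathLen_def] at hsq3; omega
        have hDt''0 : Dt''[0] = v i' := head?_getElem hhd3 hDt''pos
        have hDt''L : Dt''[Dt''.length - 1]'(by omega) = v j' := getLast?_getElem hlst3 hDt''pos
        obtain ⟨hW3len2, hW3left2, hW3mid2, hW3right2⟩ := decomp_getElem (k := k) hW3eq2
        obtain ⟨hW3clen, hW3cleft, hW3cmid, hW3cright⟩ := decomp_getElem (k := k)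
          (rfl : ((List.range i0).map v) ++ ((D y).take (m+1))
            ++ ((List.range' (l+1) (k-l)).map v) = _)
        have hTlen : ((D y).take (m+1)).length = m + 1 := by
          rw [List.length_take]; omega
        have hint : ∀ q, (hq1 : 0 < q) → (hq2 : q < Dt''.length - 1) →
            ¬ onPath v k (Dt''[q]'(by omega)) := by
          intro q hq1 hq2 hon
          rcases havoid3 _ (List.getElem_mem _) hon with h | h
          · have e1 : (((List.range i0).map v) ++ ((D y).take (m+1))
                ++ ((List.range' (l+1) (k-l)).map v))[i' + q]'(by omega)
                = (((List.range i0).map v) ++ ((D y).take (m+1))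
                ++ ((List.range' (l+1) (k-l)).map v))[i' + 0]'(by omega) := by
              rw [hW3mid2 q (by omega), hW3mid2 0 (by omega), hDt''0, h]
            have := (List.Nodup.getElem_inj_iff hW3nd).mp e1
            omega
          · have e1 : (((List.range i0).map v) ++ ((D y).take (m+1))
                ++ ((List.range' (l+1) (k-l)).map v))[i' + q]'(by omega)
                = (((List.range i0).map v) ++ ((D y).take (m+1))
                ++ ((List.range' (l+1) (k-l)).map v))[i' + (Dt''.length - 1)]'(by omega) := by
              rw [hW3mid2 q (by omega), hW3mid2 (Dt''.length - 1) (by omega), hDt''L, h]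
            have := (List.Nodup.getElem_inj_iff hW3nd).mp e1
            omega
        -- positions outside (i0, i0+m) hold vertices of P
        have hpos : ∀ p, (hp : p < (((List.range i0).map v) ++ ((D y).take (m+1))
            ++ ((List.range' (l+1) (k-l)).map v)).length) → (p ≤ i0 ∨ i0 + m ≤ p) →
            onPath v k ((((List.range i0).map v) ++ ((D y).take (m+1))
            ++ ((List.range' (l+1) (k-l)).map v))[p]'hp) := by
          intro p hp hrange
          rcases Nat.lt_or_ge p i0 with h | h
          · exact ⟨p, by omega, by rw [hW3cleft p h]⟩
          rcases hrange with h1 | h1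
          · have hpeq : p = i0 := by omega
            subst hpeq
            refine ⟨p, by omega, ?_⟩
            rw [getElem_congr_idx (show p = p + 0 by omega),
              hW3cmid 0 (by rw [hTlen]; omega), List.getElem_take]
            rw [hDy0]
          · rcases Nat.lt_or_ge p (i0 + m + 1) with h2 | h2
            · have hpeq : p = i0 + m := by omega
              subst hpeq
              refine ⟨l, by omega, ?_⟩
              rw [hW3cmid m (by rw [hTlen]; omega), List.getElem_take]
              exact hml
            · refine ⟨l + 1 + (p - (i0 + m + 1)), by
                rw [hW3clen, hTlen] at hp; omega, ?_⟩
              rw [getElem_congr_idx (show p = i0 + ((D y).take (m+1)).length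
                + (p - (i0 + m + 1)) from by rw [hTlen]; omega)]
              rw [hW3cright (p - (i0 + m + 1)) (by
                rw [hW3clen, hTlen] at hp; omega)]
        -- interior positions of Dt'' are squeezed strictly between i0 and i0 + m
        have key : ∀ q, 0 < q → q < Dt''.length - 1 → i0 < i' + q ∧ i' + q < i0 + m := by
          intro q h1 h2
          by_contra hc
          have hor : i' + q ≤ i0 ∨ i0 + m ≤ i' + q := by omega
          have honp := hpos (i' + q) (by omega) hor
          rw [hW3mid2 q (by omega)] at honp
          exact hint q h1 h2 honp
        have k1 := key 1 (by omega) (by omega)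
        have k2 := key (Dt''.length - 2) (by omega) (by omega)
        rw [pathLen_def] at hsq3
        omega
  · -- no bad hit : replace the first sqn edges of the detour by D y
    push_neg at hbad
    have w1 : IsWalk (Edel E v a) ((List.range' 0 (i0+1)).map v) s (v i0) := by
      have := segDel 0 i0 (by omega) (fun c h1 h2 => by omega)
      simpa only [hs, Nat.zero_add] using this
    have w2 : IsWalk (Edel E v a) (D y) (v i0) y := hDyW.mono hEres_del
    have w3 : IsWalk (Edel E v a) (Dt.drop sqn) y (v j0) := by
      have := hDtwalk.drop (show sqn < Dt.length by omega)
      rwa [hy] at this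
    have w4 : IsWalk (Edel E v a) ((List.range' j0 (k-j0+1)).map v) (v j0) t := by
      have := segDel j0 (k-j0) (by omega) (fun c h1 h2 => by omega)
      rwa [Nat.add_sub_cancel' hj0k, ht] at this
    have hP'w := ((w1.glue w2).glue w3).glue w4
    have hP'len : pathLen (RP.glue (RP.glue (RP.glue ((List.range' 0 (i0+1)).map v) (D y))
        (Dt.drop sqn)) ((List.range' j0 (k-j0+1)).map v))
        = i0 + sqn + (Dt.length - 1 - sqn) + (k - j0) := by
      rw [pathLen_glue ((w1.glue w2).glue w3).1 w4.1,
        pathLen_glue (w1.glue w2).1 w3.1,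
        pathLen_glue w1.1 w2.1,
        show pathLen ((List.range' 0 (i0+1)).map v) = i0 from by simp [pathLen_def],
        hDylen,
        show pathLen (Dt.drop sqn) = Dt.length - 1 - sqn from by
          rw [pathLen_def, List.length_drop]; omega,
        show pathLen ((List.range' j0 (k-j0+1)).map v) = k - j0 from by simp [pathLen_def]]
    have hP'eqL : RP.glue (RP.glue (RP.glue ((List.range' 0 (i0+1)).map v) (D y))
        (Dt.drop sqn)) ((List.range' j0 (k-j0+1)).map v)
        = ((List.range i0).map v) ++ (D y ++ Dt.drop (sqn+1))
          ++ ((List.range' (j0+1) (k-j0)).map v) := by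
      rw [glue_eq (p := (List.range' 0 (i0+1)).map v)
        (by simpa only [Nat.zero_add] using seg_getLast? v 0 i0) hDyW.2.1]
      rw [RP.glue, RP.glue, dropLast_seg, List.tail_drop, tail_seg]
      simp [List.append_assoc, List.range_eq_range']
    rw [hP'eqL] at hP'w hP'len
    have hdropne : Dt.drop (sqn+1) ≠ [] := by
      have hh : (Dt.drop (sqn+1)).length = Dt.length - (sqn+1) := by
        rw [List.length_drop]
      intro hc
      rw [hc] at hh
      simp at hh
      omega
    refine ⟨y, hyV, ((List.range i0).map v) ++ (D y ++ Dt.drop (sqn+1))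
      ++ ((List.range' (j0+1) (k-j0)).map v), D y ++ Dt.drop (sqn+1), hP'w, ?_, ?_,
      ⟨[], Dt.drop (sqn+1), by simp⟩⟩
    · rw [show pathLen (((List.range i0).map v) ++ (D y ++ Dt.drop (sqn+1))
        ++ ((List.range' (j0+1) (k-j0)).map v)) = pathLen Q from by rw [hP'len, lQ]; omega]
      exact hQd
    · refine ⟨i0, j0, hi0k, hj0k, rfl, ?_, ?_, ?_⟩
      · rw [List.head?_append_of_ne_nil _ hDyne]
        exact hDyW.2.1
      · rw [List.getLast?_append_of_ne_nil _ hdropne, getLast?_drop_of_lt (by omega)]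
        exact hDtlast
      · intro x hx hon
        rcases List.mem_append.mp hx with hxl | hxr
        · obtain ⟨mm, hmm, hxe⟩ := List.mem_iff_getElem.mp hxl
          rw [hDyLen] at hmm
          rcases Nat.eq_zero_or_pos mm with h0 | h0
          · subst h0
            left
            rw [← hxe, hDy0]
          · rcases Nat.lt_or_ge mm sqn with hlt | hge
            · obtain ⟨ll, hllk, hxl2⟩ := hon
              have hll : ll = i0 ∨ ll = j0 := by
                by_contra hc
                push_neg at hc
                exact hc.2 (hbad mm ll h0 hlt hllk (by
                  rw [List.getElem?_eq_getElem (by omega : mm < (D y).length), hxe, hxl2]) hc.1)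
              rcases hll with h | h
              · left; rw [hxl2, h]
              · right; rw [hxl2, h]
            · have hmeq : mm = sqn := by omega
              subst hmeq
              have hxy : x = y := by rw [← hxe]; exact hDyLast
              subst hxy
              exact hDtavoid x hymem hon
        · exact hDtavoid x (List.drop_subset _ _ hxr) hon

end RP
/-- The set `𝒟_n = {D x : x ∈ V_{√n}}` contains at most `n` paths, each of
exactly `⌈√n⌉` edges, and for every long triple `(s,t,e)` there are `x ∈ V_{√n}` and a
replacement path `P'` for `(s,t,e)` (an `s`-to-`t` path in `G∖{e}` of length `d_G(s,t,e)`)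
such that `D x` is a contiguous subpath of `P'` contained in its detour part. -/
theorem stmt2 {V : Type*} [Fintype V]
    (E : V → V → Prop) (n k : ℕ) (hn : Fintype.card V = n)
    (v : ℕ → V) (s t : V) (hs : v 0 = s) (ht : v k = t)
    (hPwalk : RP.IsWalk E ((List.range (k + 1)).map v) s t)
    (hPshort : RP.dist E s t = (k : ℕ∞))
    (sqn : ℕ) (hsqn : sqn = ⌈Real.sqrt n⌉₊)
    (D : V → List V)
    (hD : ∀ x ∈ RP.Vsqrt E v k sqn, ∃ i ≤ k,
        (∀ j < i, (sqn : ℕ∞) < RP.dist (RP.Eres E v k) (v j) x) ∧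
        RP.dist (RP.Eres E v k) (v i) x = (sqn : ℕ∞) ∧
        RP.IsWalk (RP.Eres E v k) (D x) (v i) x ∧ RP.pathLen (D x) = sqn)
    (hDecomp : ∀ a < k, ∀ Q, RP.IsRP E v s t a Q → ∃ Dt, RP.Detoured v k Q Dt) :
    (D '' RP.Vsqrt E v k sqn).Finite ∧
    (D '' RP.Vsqrt E v k sqn).ncard ≤ n ∧
    (∀ p ∈ D '' RP.Vsqrt E v k sqn, RP.pathLen p = sqn) ∧
    (∀ a < k, RP.LongTriple E v k s t sqn a →
      ∃ x ∈ RP.Vsqrt E v k sqn, ∃ P' Dt : List V,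
        RP.IsWalk (RP.Edel E v a) P' s t ∧
        (RP.pathLen P' : ℕ∞) = RP.dist (RP.Edel E v a) s t ∧
        RP.Detoured v k P' Dt ∧ D x <:+: Dt) := by
  have hfin : (RP.Vsqrt E v k sqn).Finite := Set.toFinite _
  have hne : Nonempty V := ⟨s⟩
  have hn1 : 1 ≤ n := by
    rw [← hn]
    exact Fintype.card_pos
  have hsqn1 : 1 ≤ sqn := by
    rw [hsqn, Nat.one_le_ceil_iff]
    have : (0 : ℝ) < (n : ℝ) := by exact_mod_cast hn1
    positivity
  have hEdge : ∀ c, c < k → E (v c) (v (c+1)) := by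
    intro c hc
    have := List.isChain_iff_getElem.mp hPwalk.2.2.2 c (by simp; omega)
    simpa using this
  have hGb : ∀ p, RP.IsWalk E p s t → k ≤ RP.pathLen p :=
    fun p hp => RP.le_pathLen_of_dist hPshort hp
  have hv : ∀ i, i ≤ k → ∀ j, j ≤ k → v i = v j → i = j :=
    RP.v_inj hs ht hEdge hGb
  refine ⟨hfin.image D, ?_, ?_, ?_⟩
  · calc (D '' RP.Vsqrt E v k sqn).ncard ≤ (RP.Vsqrt E v k sqn).ncard :=
        Set.ncard_image_le hfin
    _ ≤ (Set.univ : Set V).ncard := Set.ncard_le_ncard (Set.subset_univ _) Set.finite_univ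
    _ = n := by rw [Set.ncard_univ, Nat.card_eq_fintype_card, hn]
  · rintro p ⟨x, hx, rfl⟩
    obtain ⟨i, -, -, -, -, hlen⟩ := hD x hx
    exact hlen
  · intro a ha hLong
    obtain ⟨Q, hQrp⟩ := hLong.1
    obtain ⟨Dt, hDet⟩ := hDecomp a ha Q hQrp
    obtain ⟨i0, j0, hi0k, hj0k, hQeq, hhd, hlst, havd⟩ := hDet
    exact RP.main E v k a sqn s t hs ht hEdge hGb hv ha hsqn1 D hD (hDecomp a ha)
      hLong.2 (a - i0) i0 le_rfl Q Dt j0 hQrp hi0k hj0k hQeq hhd hlst havd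
end

section
/- There exists a subset R ⊆ V with |R| ≤ (n/⌈√n⌉)·ln n + 1 (as real numbers) such that for every long triple (s,t,e) there exists a replacement path for (s,t,e) whose detour part contains at least one vertex of R. -/
open scoped ENat ENNReal

namespace RP

variable {V : Type*}

lemma exists_shorter {E : V → V → Prop} :
    ∀ (Q : List V), Q.Chain' E → ¬Q.Nodup →
      ∃ Q' : List V, Q' ≠ [] ∧ Q'.length < Q.length ∧ Q'.Chain' E ∧
        Q'.head? = Q.head? ∧ Q'.getLast? = Q.getLast? := by
  intro Q
  induction Q with
  | nil => intro _ h; exact absurd List.nodup_nil h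
  | cons a rest ih =>
    intro hc hnd
    by_cases ha : a ∈ rest
    · obtain ⟨l1, l2, hsplit⟩ := List.append_of_mem ha
      refine ⟨a :: l2, by simp, ?_, ?_, rfl, ?_⟩
      · simp [hsplit]
      · apply hc.suffix
        refine ⟨a :: l1, ?_⟩
        simp [hsplit]
      · rw [hsplit]
        have : a :: (l1 ++ a :: l2) = (a :: l1) ++ (a :: l2) := by simp
        rw [this, List.getLast?_append]
        obtain ⟨y, hy⟩ := Option.isSome_iff_exists.mp
          (List.getLast?_isSome.mpr (by simp : (a :: l2) ≠ []))
        rw [hy]; rfl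
    · have hrest : ¬rest.Nodup := by
        intro h; exact hnd (List.nodup_cons.mpr ⟨ha, h⟩)
      obtain ⟨r', hne, hlen, hch, hh, hl⟩ := ih (hc.tail) hrest
      refine ⟨a :: r', by simp, by simpa using hlen, ?_, rfl, ?_⟩
      · apply List.isChain_cons.mpr
        refine ⟨?_, hch⟩
        intro y hy
        rw [hh] at hy
        exact (List.isChain_cons.mp hc).1 y hy
      · have h1 : (a :: r') = [a] ++ r' := rfl
        have hrestne : rest ≠ [] := by
          intro h; rw [h] at hrest; exact hrest List.nodup_nil
        have h2 : (a :: rest) = [a] ++ rest := rfl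
        rw [h1, h2, List.getLast?_append, List.getLast?_append, hl]

lemma shortest_nodup {E : V → V → Prop} {Q : List V} {u w : V}
    (hw : IsWalk E Q u w) (hd : (pathLen Q : ℕ∞) ≤ dist E u w) : Q.Nodup := by
  by_contra hnd
  obtain ⟨Q', hne, hlen, hch, hh, hl⟩ := exists_shorter Q hw.2.2.2 hnd
  have hw' : IsWalk E Q' u w := ⟨hne, hh ▸ hw.2.1, hl ▸ hw.2.2.1, hch⟩
  have hle : dist E u w ≤ (pathLen Q' : ℕ∞) := sInf_le ⟨Q', hw', rfl⟩
  have hQ'len : 1 ≤ Q'.length := List.length_pos_iff.mpr hne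
  have : pathLen Q' < pathLen Q := by
    unfold pathLen; omega
  have hcast : (pathLen Q' : ℕ∞) < (pathLen Q : ℕ∞) := by exact_mod_cast this
  exact lt_irrefl _ (lt_of_le_of_lt (hd.trans hle) hcast)

end RP

/-- Greedy step: some vertex hits an average fraction of the sets. -/
lemma greedy_step {V : Type*} [Fintype V] [DecidableEq V] (hne : Nonempty V)
    (U : Finset (Finset V)) (m : ℕ) (hU : ∀ S ∈ U, m ≤ S.card) :
    ∃ x : V, (U.card : ℝ) * m / (Fintype.card V) ≤
      ((U.filter (fun S => x ∈ S)).card : ℝ) := by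
  set n := Fintype.card V with hn
  have hn1 : 1 ≤ n := Fintype.card_pos
  have hsum : ∑ x : V, ((U.filter (fun S => x ∈ S)).card) = ∑ S ∈ U, S.card := by
    simp only [Finset.card_filter]
    rw [Finset.sum_comm]
    congr 1
    ext S
    simp [Finset.card_filter]
  have hsum2 : U.card * m ≤ ∑ S ∈ U, S.card := by
    calc U.card * m = U.card • m := rfl
    _ ≤ ∑ S ∈ U, S.card := Finset.card_nsmul_le_sum U _ m hU
  have hsumR : (U.card : ℝ) * m ≤ ∑ x : V, ((U.filter (fun S => x ∈ S)).card : ℝ) := by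
    calc (U.card : ℝ) * m = ((U.card * m : ℕ) : ℝ) := by push_cast; ring
      _ ≤ ((∑ S ∈ U, S.card : ℕ) : ℝ) := by exact_mod_cast hsum2
      _ = ((∑ x : V, (U.filter (fun S => x ∈ S)).card : ℕ) : ℝ) := by rw [hsum]
      _ = ∑ x : V, ((U.filter (fun S => x ∈ S)).card : ℝ) := by push_cast; rfl
  have hconst : ∑ _x : V, ((U.card : ℝ) * m / n) = (U.card : ℝ) * m := by
    rw [Finset.sum_const, Finset.card_univ, ← hn, nsmul_eq_mul]
    field_simp
  obtain ⟨x, _, hx⟩ := Finset.exists_le_of_sum_le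
    (f := fun _ : V => (U.card : ℝ) * m / n)
    (g := fun x : V => ((U.filter (fun S => x ∈ S)).card : ℝ))
    (s := Finset.univ) Finset.univ_nonempty (by rw [hconst]; exact hsumR)
  exact ⟨x, hx⟩

lemma greedy_iter {V : Type*} [Fintype V] [DecidableEq V] (hne : Nonempty V)
    (F : Finset (Finset V)) (m : ℕ) (hF : ∀ S ∈ F, m ≤ S.card)
    (hmn : m ≤ Fintype.card V) :
    ∀ r : ℕ, ∃ R : Finset V, R.card ≤ r ∧
      ((F.filter (fun S => ∀ x ∈ R, x ∉ S)).card : ℝ) ≤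
        (F.card : ℝ) * (1 - (m : ℝ) / (Fintype.card V)) ^ r := by
  set n := Fintype.card V with hn
  have hn1 : (1 : ℝ) ≤ n := by exact_mod_cast (Fintype.card_pos : 0 < n)
  have hfac : (0 : ℝ) ≤ 1 - (m : ℝ) / n := by
    rw [sub_nonneg, div_le_one (by linarith)]
    exact_mod_cast hmn
  intro r
  induction r with
  | zero =>
    refine ⟨∅, le_refl _, ?_⟩
    rw [Finset.filter_true_of_mem (by intro S _; simp), pow_zero, mul_one]
  | succ r ih =>
    obtain ⟨R, hRcard, hRbound⟩ := ih
    set U := F.filter (fun S => ∀ x ∈ R, x ∉ S) with hU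
    have hUm : ∀ S ∈ U, m ≤ S.card := fun S hS => hF S (Finset.mem_filter.mp hS).1
    obtain ⟨x, hx⟩ := greedy_step hne U m hUm
    refine ⟨insert x R, (Finset.card_insert_le _ _).trans (by omega), ?_⟩
    have heq : F.filter (fun S => ∀ y ∈ insert x R, y ∉ S)
        = U.filter (fun S => x ∉ S) := by
      rw [hU, Finset.filter_filter]
      apply Finset.filter_congr
      intro S _
      simp only [Finset.mem_insert]
      constructor
      · intro h; exact ⟨fun y hy => h y (Or.inr hy), h x (Or.inl rfl)⟩
      · rintro ⟨h1, h2⟩ y (rfl | hy); exact h2; exact h1 y hy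
    rw [heq]
    have hsplit : (U.filter (fun S => x ∈ S)).card + (U.filter (fun S => x ∉ S)).card
        = U.card := Finset.card_filter_add_card_filter_not _
    have hle1 : ((U.filter (fun S => x ∉ S)).card : ℝ) ≤ (U.card : ℝ) - (U.card : ℝ) * m / n := by
      have : ((U.filter (fun S => x ∉ S)).card : ℝ)
          = (U.card : ℝ) - ((U.filter (fun S => x ∈ S)).card : ℝ) := by
        have := hsplit
        push_cast [← this]
        ring
      rw [this]
      linarith
    calc ((U.filter (fun S => x ∉ S)).card : ℝ)
        ≤ (U.card : ℝ) * (1 - (m : ℝ) / n) := by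
          rw [mul_sub, mul_one]
          calc ((U.filter (fun S => x ∉ S)).card : ℝ)
              ≤ (U.card : ℝ) - (U.card : ℝ) * m / n := hle1
            _ = (U.card : ℝ) - (U.card : ℝ) * ((m : ℝ) / n) := by ring
      _ ≤ ((F.card : ℝ) * (1 - (m : ℝ) / n) ^ r) * (1 - (m : ℝ) / n) :=
          mul_le_mul_of_nonneg_right hRbound hfac
      _ = (F.card : ℝ) * (1 - (m : ℝ) / n) ^ (r + 1) := by ring

/-- Greedy hitting-set: sets of size ≥ m over a universe of size n admit a hitting
set of size ≤ (n/m) ln N + 1. -/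
lemma hitting {V : Type*} [Fintype V] [DecidableEq V]
    (F : Finset (Finset V)) (m : ℕ) (hm : 1 ≤ m) (hF : ∀ S ∈ F, m ≤ S.card)
    (hFne : F.Nonempty) :
    ∃ R : Finset V, (R.card : ℝ) ≤
        ((Fintype.card V : ℝ) / m) * Real.log F.card + 1 ∧
      ∀ S ∈ F, ∃ x ∈ R, x ∈ S := by
  set n := Fintype.card V with hn
  obtain ⟨S0, hS0⟩ := hFne
  have hmn : m ≤ n := le_trans (hF S0 hS0) (Finset.card_le_univ S0)
  have hne : Nonempty V := by
    have : 0 < n := lt_of_lt_of_le hm hmn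
    exact Fintype.card_pos_iff.mp this
  have hn0 : (0 : ℝ) < n := by exact_mod_cast lt_of_lt_of_le hm hmn
  have hm0 : (0 : ℝ) < m := by exact_mod_cast hm
  have hN1 : 1 ≤ F.card := Finset.card_pos.mpr ⟨S0, hS0⟩
  have hN0 : (0 : ℝ) < F.card := by exact_mod_cast hN1
  have hlogN : 0 ≤ Real.log F.card := Real.log_nonneg (by exact_mod_cast hN1)
  set c : ℝ := ((n : ℝ) / m) * Real.log F.card with hc
  have hc0 : 0 ≤ c := mul_nonneg (div_nonneg hn0.le hm0.le) hlogN
  set r : ℕ := ⌊c⌋₊ + 1 with hr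
  obtain ⟨R, hRcard, hRbound⟩ := greedy_iter hne F m hF hmn r
  have hkey : (F.card : ℝ) * (1 - (m : ℝ) / n) ^ r < 1 := by
    have h1 : (1 : ℝ) - (m : ℝ) / n ≤ Real.exp (-((m : ℝ) / n)) := by
      have := Real.add_one_le_exp (-((m : ℝ) / n))
      linarith
    have hfac : (0 : ℝ) ≤ 1 - (m : ℝ) / n := by
      rw [sub_nonneg, div_le_one hn0]
      exact_mod_cast hmn
    have h2 : (1 - (m : ℝ) / n) ^ r ≤ Real.exp (-((m : ℝ) / n)) ^ r :=
      pow_le_pow_left₀ hfac h1 r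
    have h3 : Real.exp (-((m : ℝ) / n)) ^ r = Real.exp ((r : ℝ) * -((m : ℝ) / n)) :=
      (Real.exp_nat_mul _ r).symm
    have hrc : c < (r : ℝ) := by
      rw [hr]; push_cast; exact Nat.lt_floor_add_one c
    have h4 : Real.log F.card < (r : ℝ) * ((m : ℝ) / n) := by
      have hmn0 : 0 < (m : ℝ) / n := div_pos hm0 hn0
      rw [hc] at hrc
      calc Real.log F.card = ((n : ℝ) / m) * Real.log F.card * ((m : ℝ) / n) := by
            field_simp
        _ < (r : ℝ) * ((m : ℝ) / n) := by
            exact mul_lt_mul_of_pos_right hrc hmn0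
    have h5 : Real.exp ((r : ℝ) * -((m : ℝ) / n)) < Real.exp (-Real.log F.card) := by
      apply Real.exp_lt_exp.mpr
      rw [mul_neg]
      linarith
    have h6 : Real.exp (-Real.log F.card) = 1 / (F.card : ℝ) := by
      rw [Real.exp_neg, Real.exp_log hN0, one_div]
    calc (F.card : ℝ) * (1 - (m : ℝ) / n) ^ r
        ≤ (F.card : ℝ) * Real.exp ((r : ℝ) * -((m : ℝ) / n)) := by
          apply mul_le_mul_of_nonneg_left _ hN0.le
          rw [← h3]; exact h2
      _ < (F.card : ℝ) * (1 / (F.card : ℝ)) := by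
          apply mul_lt_mul_of_pos_left _ hN0
          rw [← h6]; exact h5
      _ = 1 := by field_simp
  have hunhit : (F.filter (fun S => ∀ x ∈ R, x ∉ S)).card = 0 := by
    have := lt_of_le_of_lt hRbound hkey
    exact_mod_cast Nat.lt_one_iff.mp (by exact_mod_cast this)
  refine ⟨R, ?_, ?_⟩
  · have : (R.card : ℝ) ≤ (r : ℝ) := by exact_mod_cast hRcard
    calc (R.card : ℝ) ≤ (r : ℝ) := this
      _ = (⌊c⌋₊ : ℝ) + 1 := by rw [hr]; push_cast; ring
      _ ≤ c + 1 := by have := Nat.floor_le hc0; linarith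
  · intro S hS
    by_contra hcon
    push_neg at hcon
    have : S ∈ F.filter (fun S => ∀ x ∈ R, x ∉ S) :=
      Finset.mem_filter.mpr ⟨hS, hcon⟩
    rw [Finset.card_eq_zero.mp hunhit] at this
    exact absurd this (Finset.notMem_empty S)


/-- There is a set `R ⊆ V` with `|R| ≤ (n/⌈√n⌉)·ln n + 1` such that for
every long triple `(s,t,e)` some replacement path for `(s,t,e)` has its detour part containing
a vertex of `R`. -/
theorem stmt3 {V : Type*} [Fintype V] [DecidableEq V]
    (E : V → V → Prop) (n k : ℕ) (hn : Fintype.card V = n)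
    (v : ℕ → V) (s t : V) (hs : v 0 = s) (ht : v k = t)
    (hPwalk : RP.IsWalk E ((List.range (k + 1)).map v) s t)
    (hPshort : RP.dist E s t = (k : ℕ∞))
    (sqn : ℕ) (hsqn : sqn = ⌈Real.sqrt n⌉₊)
    (hDecomp : ∀ a < k, ∀ Q, RP.IsRP E v s t a Q → ∃ Dt, RP.Detoured v k Q Dt) :
    ∃ R : Finset V, (R.card : ℝ) ≤ ((n : ℝ) / (sqn : ℝ)) * Real.log n + 1 ∧
      ∀ a < k, RP.LongTriple E v k s t sqn a →
        ∃ Q Dt : List V, RP.IsRP E v s t a Q ∧ RP.Detoured v k Q Dt ∧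
          ∃ x ∈ R, x ∈ Dt := by
  classical
  have hn1 : 1 ≤ n := by
    rw [← hn]
    exact Fintype.card_pos_iff.mpr ⟨s⟩
  have hsqn1 : 1 ≤ sqn := by
    rw [hsqn]
    rw [Nat.one_le_iff_ne_zero, ← Nat.pos_iff_ne_zero, Nat.ceil_pos]
    exact Real.sqrt_pos.mpr (by exact_mod_cast hn1)
  -- k + 1 ≤ n
  have hkn : k + 1 ≤ n := by
    have hPlen : ((List.range (k + 1)).map v).length = k + 1 := by simp
    have hPpl : RP.pathLen ((List.range (k + 1)).map v) = k := by
      rw [RP.pathLen, hPlen]; omega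
    have hnd : ((List.range (k + 1)).map v).Nodup :=
      RP.shortest_nodup hPwalk (by rw [hPpl, hPshort])
    calc k + 1 = ((List.range (k + 1)).map v).toFinset.card := by
          rw [List.toFinset_card_of_nodup hnd, hPlen]
      _ ≤ Fintype.card V := Finset.card_le_univ _
      _ = n := hn
  -- choice of replacement paths and detours for long triples
  have key : ∀ a : ℕ, ∃ QD : List V × List V,
      a < k → RP.LongTriple E v k s t sqn a →
        RP.IsRP E v s t a QD.1 ∧ RP.Detoured v k QD.1 QD.2 ∧
        sqn + 1 ≤ QD.2.toFinset.card := by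
    intro a
    by_cases h : a < k ∧ RP.LongTriple E v k s t sqn a
    · obtain ⟨hak, hlong⟩ := h
      obtain ⟨Q, hQ⟩ := hlong.1
      obtain ⟨Dt, hDt⟩ := hDecomp a hak Q hQ
      have hQnd : Q.Nodup := RP.shortest_nodup hQ.1 (le_of_eq hQ.2)
      have hDtsub : Dt.Sublist Q := by
        obtain ⟨i, j, _, _, hsplit, _⟩ := hDt
        rw [hsplit, List.append_assoc]
        exact ((List.sublist_append_left Dt _).trans (List.sublist_append_right _ _))
      have hDtnd : Dt.Nodup := hQnd.sublist hDtsub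
      have hlen : sqn < RP.pathLen Dt := hlong.2 Q Dt hQ hDt
      have hcard : sqn + 1 ≤ Dt.toFinset.card := by
        rw [List.toFinset_card_of_nodup hDtnd]
        unfold RP.pathLen at hlen
        omega
      exact ⟨(Q, Dt), fun _ _ => ⟨hQ, hDt, hcard⟩⟩
    · exact ⟨([], []), fun h1 h2 => absurd ⟨h1, h2⟩ h⟩
  choose f hf using key
  set longSet := (Finset.range k).filter (fun a => RP.LongTriple E v k s t sqn a)
    with hlongSet
  by_cases hLS : longSet.Nonempty
  · set F := longSet.image (fun a => (f a).2.toFinset) with hFdef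
    have hFne : F.Nonempty := hLS.image _
    have hFm : ∀ S ∈ F, sqn + 1 ≤ S.card := by
      intro S hS
      obtain ⟨a, ha, rfl⟩ := Finset.mem_image.mp hS
      obtain ⟨hak, hlong⟩ := Finset.mem_filter.mp ha
      exact (hf a (Finset.mem_range.mp hak) hlong).2.2
    obtain ⟨R, hRcard, hRhit⟩ := hitting F (sqn + 1) (by omega) hFm hFne
    refine ⟨R, ?_, ?_⟩
    · have hNk : F.card ≤ k := le_trans (Finset.card_image_le)
        (le_trans (Finset.card_filter_le _ _) (le_of_eq (Finset.card_range k)))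
      have hN1 : 1 ≤ F.card := Finset.card_pos.mpr hFne
      have hNn : F.card ≤ n := by omega
      have hlogN : (0:ℝ) ≤ Real.log F.card := Real.log_nonneg (by exact_mod_cast hN1)
      have hlogle : Real.log F.card ≤ Real.log n := by
        apply Real.log_le_log (by exact_mod_cast hN1)
        exact_mod_cast hNn
      have hdivle : (n : ℝ) / (sqn + 1 : ℕ) ≤ (n : ℝ) / sqn := by
        apply div_le_div_of_nonneg_left (by positivity) (by exact_mod_cast hsqn1)
        push_cast; linarith
      have hsqn0 : (0:ℝ) ≤ (n : ℝ) / sqn := by positivity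
      calc (R.card : ℝ)
          ≤ ((Fintype.card V : ℝ) / (sqn + 1 : ℕ)) * Real.log F.card + 1 := hRcard
        _ = ((n : ℝ) / (sqn + 1 : ℕ)) * Real.log F.card + 1 := by rw [hn]
        _ ≤ ((n : ℝ) / sqn) * Real.log F.card + 1 := by
            have := mul_le_mul_of_nonneg_right hdivle hlogN; linarith
        _ ≤ ((n : ℝ) / sqn) * Real.log n + 1 := by
            have := mul_le_mul_of_nonneg_left hlogle hsqn0; linarith
    · intro a hak hlong
      have ha : a ∈ longSet :=
        Finset.mem_filter.mpr ⟨Finset.mem_range.mpr hak, hlong⟩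
      have hSF : (f a).2.toFinset ∈ F := Finset.mem_image_of_mem _ ha
      obtain ⟨x, hxR, hxS⟩ := hRhit _ hSF
      obtain ⟨h1, h2, _⟩ := hf a hak hlong
      exact ⟨(f a).1, (f a).2, h1, h2, x, hxR, List.mem_toFinset.mp hxS⟩
  · refine ⟨∅, ?_, ?_⟩
    · have hlog : (0:ℝ) ≤ Real.log n := Real.log_nonneg (by exact_mod_cast hn1)
      have : (0:ℝ) ≤ ((n:ℝ)/sqn) * Real.log n := by positivity
      simp only [Finset.card_empty, Nat.cast_zero]
      linarith
    · intro a hak hlong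
      have ha : a ∈ longSet :=
        Finset.mem_filter.mpr ⟨Finset.mem_range.mpr hak, hlong⟩
      exact absurd ⟨a, ha⟩ hLS
end

section
/- Let (s,t,e) be a long triple, and let Q be a replacement path for (s,t,e) written as Q = ⟨v_0,…,v_j⟩ ∘ Detour ∘ Suffix, where Detour is a path starting at v_j that intersects P only in its first and last vertices and contains more than ⌈√n⌉ edges, and Suffix is the remaining portion of Q ending at t. Let x be the vertex of Detour reached after exactly ⌈√n⌉ edges from v_j (the (⌈√n⌉+1)-th vertex along Detour). Then d_{G'}(v_j, x) = ⌈√n⌉, x ∈ V_{√n}, and j = ρ(x). -/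
open scoped ENat ENNReal

namespace RPAux

lemma chain'_edge {α : Type*} {R : α → α → Prop} {l : List α} (h : l.Chain' R)
    {m : ℕ} {a b : α} (ha : l[m]? = some a) (hb : l[m+1]? = some b) : R a b := by
  obtain ⟨hb', rfl⟩ := List.getElem?_eq_some_iff.mp hb
  obtain ⟨ha', rfl⟩ := List.getElem?_eq_some_iff.mp ha
  have := List.isChain_iff_getElem.mp h m (by omega)
  simpa [List.get_eq_getElem] using this

lemma exists_dup {α : Type*} : ∀ {l : List α}, ¬ l.Nodup →
    ∃ (a : α) (A B C : List α), l = A ++ a :: (B ++ a :: C) := by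
  intro l hl
  induction l with
  | nil => simp at hl
  | cons c l ih =>
    rw [List.nodup_cons] at hl
    push_neg at hl
    by_cases hc : c ∈ l
    · obtain ⟨B, C, rfl⟩ := List.append_of_mem hc
      exact ⟨c, [], B, C, by simp⟩
    · obtain ⟨a, A, B, C, rfl⟩ := ih (hl hc)
      exact ⟨a, c :: A, B, C, by simp⟩

end RPAux

namespace RPAux

lemma dist_le {V : Type*} (E : V → V → Prop) {p : List V} {u w : V}
    (hp : RP.IsWalk E p u w) : RP.dist E u w ≤ (RP.pathLen p : ℕ∞) :=
  sInf_le ⟨p, hp, rfl⟩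

lemma nodup_of_shortest {V : Type*} {E : V → V → Prop} {p : List V} {u w : V}
    (hp : RP.IsWalk E p u w) (hd : (RP.pathLen p : ℕ∞) = RP.dist E u w) : p.Nodup := by
  by_contra hnd
  obtain ⟨c, A, B, C, rfl⟩ := exists_dup hnd
  obtain ⟨hne, hhead, hlast, hchain⟩ := hp
  have hchain' : (A ++ c :: C).Chain' E := by
    unfold List.Chain' at hchain ⊢
    rw [List.isChain_append] at hchain ⊢
    obtain ⟨h1, h2, h3⟩ := hchain
    refine ⟨h1, ?_, ?_⟩
    · have : (c :: B) ++ (c :: C) = c :: (B ++ c :: C) := by simp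
      rw [← this, List.isChain_append] at h2
      exact h2.2.1
    · simpa using h3
  have hhead' : (A ++ c :: C).head? = some u := by
    cases A with
    | nil => simpa using hhead
    | cons h t => simpa using hhead
  have hlast' : (A ++ c :: C).getLast? = some w := by
    rw [List.getLast?_append]
    rw [List.getLast?_append] at hlast
    have e1 : (c :: (B ++ c :: C)).getLast? = (c :: C).getLast? := by
      have : c :: (B ++ c :: C) = (c :: B) ++ (c :: C) := by simp
      rw [this, List.getLast?_append]
      cases h : (c :: C).getLast? with
      | none => simp [List.getLast?_eq_getElem?] at h
      | some z => simp [h]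
    rw [e1] at hlast
    exact hlast
  have hwalk' : RP.IsWalk E (A ++ c :: C) u w := ⟨by simp, hhead', hlast', hchain'⟩
  have h1 : RP.dist E u w ≤ (RP.pathLen (A ++ c :: C) : ℕ∞) := dist_le E hwalk'
  rw [← hd] at h1
  have h2 : RP.pathLen (A ++ c :: C) < RP.pathLen (A ++ c :: (B ++ c :: C)) := by
    simp [RP.pathLen]
    omega
  exact absurd (Nat.cast_le.mp h1) (by omega)

end RPAux

/-- Let `(s,t,e)` (with `e = (v a, v (a+1))`) be a long triple and let
`Q = ⟨v 0, …, v j⟩ ∘ Dt ∘ Suff` be a replacement path for it, where the detour `Dt` starts at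
`v j`, meets `P` only in its first and last vertices, and has more than `⌈√n⌉` edges, and
`Suff` ends at `t`. If `x` is the `(⌈√n⌉+1)`-st vertex along `Dt`, then
`d_{G'}(v j, x) = ⌈√n⌉`, `x ∈ V_{√n}`, and `j = ρ(x)` (i.e., all earlier indices have
`G'`-distance to `x` exceeding `⌈√n⌉`). -/

theorem stmt4 {V : Type*} [Fintype V]
    (E : V → V → Prop) (n k : ℕ) (hn : Fintype.card V = n)
    (v : ℕ → V) (s t : V) (hs : v 0 = s) (ht : v k = t)
    (hPwalk : RP.IsWalk E ((List.range (k + 1)).map v) s t)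
    (hPshort : RP.dist E s t = (k : ℕ∞))
    (sqn : ℕ) (hsqn : sqn = ⌈Real.sqrt n⌉₊)
    (a : ℕ) (ha : a < k) (hlong : RP.LongTriple E v k s t sqn a)
    (j : ℕ) (hj : j ≤ k)
    (Q Dt Suff : List V)
    (hQrp : RP.IsRP E v s t a Q)
    (hQeq : Q = ((List.range j).map v) ++ Dt ++ Suff.tail)
    (hDhead : Dt.head? = some (v j))
    (hDSuff : Dt.getLast? = Suff.head?)
    (hSuffLast : Suff.getLast? = some t)
    (hDonP : ∀ y ∈ Dt, RP.onPath v k y → y = v j ∨ Dt.getLast? = some y)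
    (hDlen : sqn < RP.pathLen Dt)
    (x : V) (hx : Dt[sqn]? = some x) :
    RP.dist (RP.Eres E v k) (v j) x = (sqn : ℕ∞) ∧
    x ∈ RP.Vsqrt E v k sqn ∧
    ∀ i < j, (sqn : ℕ∞) < RP.dist (RP.Eres E v k) (v i) x := by
  classical
  obtain ⟨hQwalk, hQdist⟩ := hQrp
  obtain ⟨hQne, hQhead, hQlast, hQchain⟩ := hQwalk
  have hQnodup : Q.Nodup := RPAux.nodup_of_shortest ⟨hQne, hQhead, hQlast, hQchain⟩ hQdist
  have hDtlen : sqn + 2 ≤ Dt.length := by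
    have h := hDlen; unfold RP.pathLen at h; omega
  have hdropj : Q.drop j = Dt ++ Suff.tail := by
    rw [hQeq, List.append_assoc]
    have h := List.drop_left (l₁ := (List.range j).map v) (l₂ := Dt ++ Suff.tail)
    simpa using h
  have hQm : ∀ m : ℕ, Q[j + m]? = (Dt ++ Suff.tail)[m]? := by
    intro m; rw [← hdropj, List.getElem?_drop]
  have hQmDt : ∀ m : ℕ, m < Dt.length → Q[j + m]? = Dt[m]? := by
    intro m hm; rw [hQm, List.getElem?_append_left hm]
  have hxQ : Q[j + sqn]? = some x := by
    rw [hQmDt sqn (by omega)]; exact hx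
  have hQlenge : j + Dt.length ≤ Q.length := by
    rw [hQeq]; simp
  have hQlen2 : j + sqn + 2 ≤ Q.length := by omega
  have hDt0 : Dt[0]? = some (v j) := by rw [← List.head?_eq_getElem?]; exact hDhead
  have hQj : Q[j]? = some (v j) := by
    have h := hQmDt 0 (by omega); simpa using h.trans hDt0
  have hQedge : ∀ (m : ℕ) {y z : V}, Q[m]? = some y → Q[m+1]? = some z →
      RP.Edel E v a y z := by
    intro m y z hy hz
    exact RPAux.chain'_edge hQchain hy hz
  have hQinj : ∀ {m₁ m₂ : ℕ} {y : V}, Q[m₁]? = some y → Q[m₂]? = some y → m₁ = m₂ := by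
    intro m₁ m₂ y h1 h2
    exact (List.getElem?_inj (List.getElem?_eq_some_iff.mp h1).1 hQnodup).mp (h1.trans h2.symm)
  have hDtlast : Dt.getLast? = Dt[Dt.length - 1]? := List.getLast?_eq_getElem? (l := Dt)
  -- the first sqn edges of Dt are edges of G'
  have hEres : ∀ m : ℕ, m + 1 ≤ sqn → ∀ {y z : V}, Dt[m]? = some y → Dt[m+1]? = some z →
      RP.Eres E v k y z := by
    intro m hm y z hy hz
    have hyQ : Q[j+m]? = some y := by rw [hQmDt m (by omega)]; exact hy
    have hzQ : Q[j+m+1]? = some z := by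
      rw [show j+m+1 = j+(m+1) by ring, hQmDt (m+1) (by omega)]; exact hz
    have hedel := hQedge (j+m) hyQ hzQ
    refine ⟨hedel.1, ?_⟩
    rintro ⟨p, hp, rfl, rfl⟩
    have hzmem : v (p+1) ∈ Dt := by
      obtain ⟨h', e⟩ := List.getElem?_eq_some_iff.mp hz
      exact e ▸ List.getElem_mem h'
    rcases hDonP _ hzmem ⟨p+1, by omega, rfl⟩ with h | h
    · rw [h] at hzQ
      have := hQinj hzQ hQj
      omega
    · rw [hDtlast, List.getElem?_eq_getElem (by omega)] at h
      have hlastQ : Q[j + (Dt.length - 1)]? = some (v (p+1)) := by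
        rw [hQmDt (Dt.length - 1) (by omega), List.getElem?_eq_getElem (by omega)]
        rw [Option.some_inj] at h ⊢
        exact h
      have := hQinj hzQ hlastQ
      omega
  -- upper bound walk: the first sqn edges of Dt
  have htake : ∀ m : ℕ, m < sqn + 1 → (Dt.take (sqn+1))[m]? = Dt[m]? := by
    intro m hm; rw [List.getElem?_take, if_pos hm]
  have hWwalk : RP.IsWalk (RP.Eres E v k) (Dt.take (sqn+1)) (v j) x := by
    have hWlen : (Dt.take (sqn+1)).length = sqn + 1 := by simp; omega
    refine ⟨?_, ?_, ?_, ?_⟩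
    · intro h; rw [h] at hWlen; simp at hWlen
    · rw [List.head?_eq_getElem?, List.getElem?_take, if_pos (by omega)]; exact hDt0
    · rw [List.getLast?_eq_getElem?, hWlen, Nat.add_sub_cancel,
        List.getElem?_take, if_pos (by omega)]
      exact hx
    · unfold List.Chain'
      rw [List.isChain_iff_getElem]
      intro m hm
      rw [hWlen] at hm
      apply hEres m (by omega)
      · rw [← htake m (by omega)]; exact List.getElem?_eq_getElem _
      · rw [← htake (m+1) (by omega)]; exact List.getElem?_eq_getElem _
  -- the key lower-bound estimate
  have key : ∀ i, i ≤ j → ∀ R : List V, RP.IsWalk (RP.Eres E v k) R (v i) x →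
      j + sqn ≤ i + RP.pathLen R := by
    intro i hij R hR
    by_contra hcon
    push_neg at hcon
    obtain ⟨hRne, hRhead, hRlast, hRchain⟩ := hR
    have hRlen : R.length = RP.pathLen R + 1 := by
      unfold RP.pathLen
      have : R.length ≠ 0 := by simpa using hRne
      omega
    set D : List V := Q.drop (j + sqn + 1) with hD
    have hDlen' : D.length = Q.length - (j + sqn + 1) := List.length_drop
    have hDne : D ≠ [] := by
      intro h; rw [h] at hDlen'; simp at hDlen'; omega
    -- prefix chain of P up to v j
    have hPrefChain : (((List.range (j+1)).map v)).Chain' (RP.Edel E v a) := by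
      apply hQchain.prefix
      have hDt' : Dt = v j :: Dt.tail := by
        have h0 : Dt ≠ [] := by intro h; rw [h] at hDt0; simp at hDt0
        conv_lhs => rw [← List.cons_head_tail h0]
        congr 1
        have := List.head?_eq_head h0
        rw [this] at hDhead
        exact Option.some_inj.mp hDhead
      refine ⟨Dt.tail ++ Suff.tail, ?_⟩
      rw [hQeq, List.range_succ, List.map_append, hDt']
      simp
    have hPrefEl : ∀ m : ℕ, m ≤ j → ((List.range (j+1)).map v)[m]? = some (v m) := by
      intro m hm
      rw [List.getElem?_map, List.getElem?_range (by omega)]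
      rfl
    have hPrefEdge : ∀ m : ℕ, m + 1 ≤ j → RP.Edel E v a (v m) (v (m+1)) := by
      intro m hm
      exact RPAux.chain'_edge hPrefChain (hPrefEl m (by omega)) (hPrefEl (m+1) hm)
    set Q' : List V := (List.range i).map v ++ (R ++ D) with hQ'
    have hQ'chain : Q'.Chain' (RP.Edel E v a) := by
      unfold List.Chain'
      rw [List.isChain_append]
      refine ⟨?_, ?_, ?_⟩
      · apply hPrefChain.prefix
        refine List.IsPrefix.map v ?_
        rw [show List.range i = (List.range (j+1)).take i by
          rw [List.take_range]; congr 1; omega]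
        exact List.take_prefix _ _
      · rw [List.isChain_append]
        refine ⟨hRchain.imp (fun y z hyz => ⟨hyz.1, fun hc => hyz.2 ⟨a, ha, hc.1, hc.2⟩⟩), hQchain.drop _, ?_⟩
        intro y hy z hz
        rw [hRlast, Option.mem_some_iff] at hy
        subst hy
        apply hQedge (j + sqn) hxQ
        rw [List.head?_eq_getElem?, List.getElem?_drop] at hz
        simpa using hz
      · intro y hy z hz
        rw [List.head?_append, hRhead] at hz
        simp only [Option.some_or, Option.mem_some_iff] at hz
        subst hz
        rcases Nat.eq_zero_or_pos i with h0 | h0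
        · subst h0; simp at hy
        · rw [List.getLast?_eq_getElem?] at hy
          rw [List.getElem?_map, List.length_map, List.length_range,
            List.getElem?_range (by omega)] at hy
          simp only [Option.mem_def, Option.map_some, Option.some_inj] at hy
          subst hy
          have := hPrefEdge (i-1) (by omega)
          rwa [show i - 1 + 1 = i by omega] at this
    have hQ'head : Q'.head? = some s := by
      rcases Nat.eq_zero_or_pos i with h0 | h0
      · subst h0
        rw [hQ']
        simp only [List.range_zero, List.map_nil, List.nil_append]
        rw [List.head?_append, hRhead]
        simp [hs]
      · rw [hQ', List.head?_append, List.head?_eq_getElem?, List.getElem?_map,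
          List.getElem?_range (by omega)]
        simp [hs]
    have hQ'last : Q'.getLast? = some t := by
      have hDlast : D.getLast? = some t := by
        rw [List.getLast?_eq_getElem?, hDlen', List.getElem?_drop,
          show j + sqn + 1 + (Q.length - (j + sqn + 1) - 1) = Q.length - 1 by omega,
          ← List.getLast?_eq_getElem?]
        exact hQlast
      rw [hQ', ← List.append_assoc, List.getLast?_append, hDlast]
      rfl
    have hQ'walk : RP.IsWalk (RP.Edel E v a) Q' s t := by
      refine ⟨?_, hQ'head, hQ'last, hQ'chain⟩
      intro h; rw [h] at hQ'head; simp at hQ'head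
    have hle := RPAux.dist_le (RP.Edel E v a) hQ'walk
    rw [← hQdist, Nat.cast_le] at hle
    have hQ'len : Q'.length = i + R.length + D.length := by simp [hQ']; omega
    unfold RP.pathLen at hle
    rw [hQ'len, hDlen'] at hle
    omega
  have hsqnW : RP.pathLen (Dt.take (sqn + 1)) = sqn := by
    unfold RP.pathLen
    simp
    omega
  have part1 : RP.dist (RP.Eres E v k) (v j) x = (sqn : ℕ∞) := by
    apply le_antisymm
    · have := RPAux.dist_le (RP.Eres E v k) hWwalk
      rwa [hsqnW] at this
    · apply le_sInf
      rintro _ ⟨R, hR, rfl⟩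
      have hk := key j le_rfl R hR
      have h2 : sqn ≤ RP.pathLen R := by omega
      show ((sqn : ℕ) : ℕ∞) ≤ ((RP.pathLen R : ℕ) : ℕ∞)
      exact_mod_cast h2
  have part3 : ∀ i < j, (sqn : ℕ∞) < RP.dist (RP.Eres E v k) (v i) x := by
    intro i hij
    have h1 : ((sqn + 1 : ℕ) : ℕ∞) ≤ RP.dist (RP.Eres E v k) (v i) x := by
      apply le_sInf
      rintro _ ⟨R, hR, rfl⟩
      have hk := key i hij.le R hR
      have h2 : sqn + 1 ≤ RP.pathLen R := by omega
      show ((sqn + 1 : ℕ) : ℕ∞) ≤ ((RP.pathLen R : ℕ) : ℕ∞)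
      exact_mod_cast h2
    calc (sqn : ℕ∞) < ((sqn + 1 : ℕ) : ℕ∞) := by exact_mod_cast Nat.lt_succ_self sqn
      _ ≤ _ := h1
  exact ⟨part1, ⟨j, hj, part1, part3⟩, part3⟩
end

section
/- Let (s,t,e) be a long triple with e = (v_a, v_{a+1}) for some index a, and let Q be a replacement path for (s,t,e) written as Q = ⟨v_0,…,v_j⟩ ∘ P_1 ∘ P_2 with j ≤ a, where P_1 is a path from v_j of exactly ⌈√n⌉ edges ending at a vertex x, P_1 is disjoint from P except for its first vertex v_j, P_2 is the remaining portion of Q from x to t, and j = ρ(x) with x ∈ V_{√n}. Then for every shortest v_{ρ(x)}-to-x path D in G', the path ⟨v_0,…,v_{ρ(x)}⟩ ∘ D ∘ P_2 is an s-to-t path in G∖{e} whose length equals d_G(s,t,e). -/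
open scoped ENat ENNReal

/-- Let `(s,t,e)` (with `e = (v a, v (a+1))`) be a long triple and let
`Q = ⟨v 0, …, v j⟩ ∘ P₁ ∘ P₂` be a replacement path for it with `j ≤ a`, where `P₁` is a path
of exactly `⌈√n⌉` edges from `v j` to `x`, disjoint from `P` except for `v j`, `P₂` goes from
`x` to `t`, and `j = ρ(x)` with `x ∈ V_{√n}`. Then for every shortest `v (ρ x)`-to-`x` path
`Dp` in `G'`, the path `⟨v 0, …, v (ρ x)⟩ ∘ Dp ∘ P₂` is an `s`-to-`t` path in `G∖{e}` whose
length equals `d_G(s,t,e)`. -/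
theorem stmt5 {V : Type*} [Fintype V]
    (E : V → V → Prop) (n k : ℕ) (hn : Fintype.card V = n)
    (v : ℕ → V) (s t : V) (hs : v 0 = s) (ht : v k = t)
    (hPwalk : RP.IsWalk E ((List.range (k + 1)).map v) s t)
    (hPshort : RP.dist E s t = (k : ℕ∞))
    (sqn : ℕ) (hsqn : sqn = ⌈Real.sqrt n⌉₊)
    (a : ℕ) (ha : a < k) (hlong : RP.LongTriple E v k s t sqn a)
    (j : ℕ) (hja : j ≤ a)
    (x : V) (hxV : x ∈ RP.Vsqrt E v k sqn)
    (hρ : RP.dist (RP.Eres E v k) (v j) x = (sqn : ℕ∞))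
    (hρmin : ∀ i < j, (sqn : ℕ∞) < RP.dist (RP.Eres E v k) (v i) x)
    (Q P₁ P₂ : List V)
    (hQrp : RP.IsRP E v s t a Q)
    (hQeq : Q = ((List.range j).map v) ++ P₁ ++ P₂.tail)
    (hP₁head : P₁.head? = some (v j)) (hP₁last : P₁.getLast? = some x)
    (hP₁len : RP.pathLen P₁ = sqn)
    (hP₁disj : ∀ y ∈ P₁, RP.onPath v k y → y = v j)
    (hP₂head : P₂.head? = some x) (hP₂last : P₂.getLast? = some t) :
    ∀ Dp : List V, RP.IsWalk (RP.Eres E v k) Dp (v j) x → RP.pathLen Dp = sqn →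
      RP.IsWalk (RP.Edel E v a) (((List.range j).map v) ++ Dp ++ P₂.tail) s t ∧
      (RP.pathLen (((List.range j).map v) ++ Dp ++ P₂.tail) : ℕ∞) =
        RP.dist (RP.Edel E v a) s t := by
  intro Dp hDwalk hDlen
  obtain ⟨hQwalk, hQdist⟩ := hQrp
  obtain ⟨hQne, hQhead, hQlast, hQchain⟩ := hQwalk
  obtain ⟨hDne, hDhead, hDlast, hDchain⟩ := hDwalk
  have hP₁ne : P₁ ≠ [] := by intro h; simp [h] at hP₁head
  have hlenP₁ : P₁.length = sqn + 1 := by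
    have h1 : 0 < P₁.length := List.length_pos_iff.mpr hP₁ne
    unfold RP.pathLen at hP₁len; omega
  have hlenD : Dp.length = sqn + 1 := by
    have h1 : 0 < Dp.length := List.length_pos_iff.mpr hDne
    unfold RP.pathLen at hDlen; omega
  set A := ((List.range j).map v) with hA
  set C := P₂.tail with hC
  -- chain decomposition of Q
  rw [hQeq, List.Chain', List.isChain_append, List.isChain_append] at hQchain
  obtain ⟨⟨hchA, hchP₁, hjAP₁⟩, hchC, hjP₁C⟩ := hQchain
  have himp : ∀ a' b', RP.Eres E v k a' b' → RP.Edel E v a a' b' := by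
    rintro a' b' ⟨hE, hno⟩
    exact ⟨hE, fun ⟨h1, h2⟩ => hno ⟨a, ha, h1, h2⟩⟩
  have hchD : List.Chain' (RP.Edel E v a) Dp := hDchain.imp himp
  have hnewchain : List.Chain' (RP.Edel E v a) (A ++ Dp ++ C) := by
    rw [List.Chain', List.isChain_append, List.isChain_append]
    refine ⟨⟨hchA, hchD, ?_⟩, hchC, ?_⟩
    · intro y hy z hz
      rw [hDhead, Option.mem_some_iff] at hz
      subst hz
      exact hjAP₁ y hy (v j) (by rw [hP₁head]; rfl)
    · intro y hy z hz
      rw [List.getLast?_append, hDlast, Option.or, Option.mem_some_iff] at hy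
      subst hy
      exact hjP₁C x (by rw [List.getLast?_append, hP₁last]; rfl) z hz
  have hne : (A ++ Dp ++ C) ≠ [] := by
    simp only [ne_eq, List.append_eq_nil_iff, not_and]
    intro h; exact absurd h.2 hDne
  have hhead : (A ++ Dp ++ C).head? = some s := by
    have h := hQhead
    rw [hQeq] at h
    simp only [List.append_assoc, List.head?_append, hDhead, hP₁head, Option.or] at h ⊢
    exact h
  have hlast : (A ++ Dp ++ C).getLast? = some t := by
    have h := hQlast
    rw [hQeq] at h
    simp only [List.getLast?_append, hDlast, hP₁last, Option.or] at h ⊢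
    exact h
  have hlen : RP.pathLen (A ++ Dp ++ C) = RP.pathLen Q := by
    rw [hQeq]
    unfold RP.pathLen
    simp [List.length_append, hlenP₁, hlenD]
  refine ⟨⟨hne, hhead, hlast, hnewchain⟩, ?_⟩
  rw [hlen, hQdist]
end

section
/- Let 0 ≤ i ≤ k−1 and let x ≠ v_{i+1} be a vertex such that d_{G^w_{i+1}}(s,x) = ε·(i+1) + d_{G'}(v_{i+1}, x) with d_{G'}(v_{i+1},x) finite (i.e., some shortest s-to-x path in G^w_{i+1} consists of the prefix ⟨v_0,…,v_{i+1}⟩ of P followed by a shortest v_{i+1}-to-x path in G'). Then ⌊d_{G^w_i}(s,x)⌋ ≥ ⌊d_{G^w_{i+1}}(s,x)⌋ + 1, where the inequality holds trivially if d_{G^w_i}(s,x) = ∞. -/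
open scoped ENat ENNReal

namespace RPAux

open RP List

variable {V : Type*}

lemma wt_nonneg {w : V → V → ℝ} (hw : ∀ a b, 0 ≤ w a b) : ∀ Q : List V, 0 ≤ wt w Q
  | [] => le_refl 0
  | [_] => le_refl 0
  | a :: b :: rest => add_nonneg (hw a b) (wt_nonneg hw (b :: rest))

lemma wt_split (w : V → V → ℝ) : ∀ (a : List V) (x : V) (b : List V),
    wt w (a ++ x :: b) = wt w (a ++ [x]) + wt w (x :: b)
  | [], x, b => by simp [wt]
  | [y], x, b => by simp [wt]
  | y :: z :: a, x, b => by
    have h := wt_split w (z :: a) x b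
    simp only [cons_append] at h ⊢
    rw [show wt w (y :: z :: (a ++ x :: b)) = w y z + wt w (z :: (a ++ x :: b)) from rfl,
        show wt w (y :: z :: (a ++ [x])) = w y z + wt w (z :: (a ++ [x])) from rfl, h]
    ring

lemma chain'_splice {R : V → V → Prop} {a b c : List V} {x : V}
    (h : List.Chain' R (a ++ x :: (b ++ x :: c))) : List.Chain' R (a ++ x :: c) := by
  rw [show List.Chain' R = List.IsChain R from rfl, List.isChain_split] at h ⊢
  refine ⟨h.1, ?_⟩
  have h2 := h.2
  rw [show x :: (b ++ x :: c) = (x :: b) ++ x :: c from rfl, List.isChain_split] at h2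
  exact h2.2

lemma walk_splice {E : V → V → Prop} {u t : V} {a b c : List V} {x : V}
    (h : IsWalk E (a ++ x :: (b ++ x :: c)) u t) : IsWalk E (a ++ x :: c) u t := by
  obtain ⟨hne, hh, hl, hc⟩ := h
  refine ⟨by simp, ?_, ?_, chain'_splice hc⟩
  · rw [← hh]; cases a <;> simp
  · have hl' : ((a ++ x :: b) ++ x :: c).getLast? = some t := by
      rw [← hl]; congr 1; simp
    rw [List.getLast?_append_cons] at hl'
    rw [List.getLast?_append_cons]
    exact hl'

lemma sublist_pair {x y : V} : ∀ {l : List V}, [x, y] <+ l →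
    ∃ a b c, l = a ++ x :: (b ++ y :: c) := by
  intro l h
  induction l with
  | nil => simp at h
  | cons z l ih =>
    cases h with
    | cons _ h' =>
      obtain ⟨a, b, c, rfl⟩ := ih h'
      exact ⟨z :: a, b, c, rfl⟩
    | cons_cons _ h' =>
      have hy : y ∈ l := (List.singleton_sublist).1 h'
      obtain ⟨b, c, rfl⟩ := List.append_of_mem hy
      exact ⟨[], b, c, rfl⟩

lemma exists_nodup_walk {E : V → V → Prop} {w : V → V → ℝ} (hw : ∀ p q, 0 ≤ w p q) :
    ∀ (N : ℕ) (Q : List V) (u t : V), Q.length ≤ N → IsWalk E Q u t →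
    ∃ Q', IsWalk E Q' u t ∧ Q'.Nodup ∧ Q'.length ≤ Q.length ∧ wt w Q' ≤ wt w Q := by
  intro N
  induction N with
  | zero =>
    intro Q u t hlen hQ
    cases Q with
    | nil => exact absurd rfl hQ.1
    | cons a l => simp at hlen
  | succ N ih =>
    intro Q u t hlen hQ
    by_cases hnd : Q.Nodup
    · exact ⟨Q, hQ, hnd, le_rfl, le_rfl⟩
    · obtain ⟨x, hx⟩ := List.exists_duplicate_iff_not_nodup.2 hnd
      obtain ⟨a, b, c, rfl⟩ := sublist_pair (List.duplicate_iff_sublist.1 hx)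
      have hW := walk_splice hQ
      have hlt : (a ++ x :: c).length < (a ++ x :: (b ++ x :: c)).length := by
        simp
      have hlen' : (a ++ x :: c).length ≤ N := by
        have := hlen; simp at this ⊢; omega
      obtain ⟨Q', h1, h2, h3, h4⟩ := ih (a ++ x :: c) u t hlen' hW
      refine ⟨Q', h1, h2, le_trans h3 (le_of_lt hlt), le_trans h4 ?_⟩
      rw [wt_split w a x c, wt_split w a x (b ++ x :: c)]
      have hsplit : wt w (x :: (b ++ x :: c)) = wt w ((x :: b) ++ [x]) + wt w (x :: c) := by
        rw [show x :: (b ++ x :: c) = (x :: b) ++ x :: c from rfl, wt_split]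
      rw [hsplit]
      have := wt_nonneg hw ((x :: b) ++ [x])
      linarith

lemma Ei_mono {E : V → V → Prop} {v : ℕ → V} {k i : ℕ} : ∀ {a b : V},
    Ei E v k i a b → Ei E v k (i + 1) a b := by
  intro a b h
  obtain ⟨hE, ha, hb⟩ := h
  refine ⟨hE, ?_, ?_⟩
  · rintro ⟨l, h1, h2, h3⟩; exact ha ⟨l, by omega, h2, h3⟩
  · rintro ⟨l, h1, h2, h3⟩; exact hb ⟨l, by omega, h2, h3⟩

lemma isWalk_mono {E E' : V → V → Prop} (h : ∀ a b, E a b → E' a b) {Q : List V} {u t : V}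
    (hw : IsWalk E Q u t) : IsWalk E' Q u t :=
  ⟨hw.1, hw.2.1, hw.2.2.1, hw.2.2.2.imp h⟩

lemma count_bound (E : V → V → Prop) (v : ℕ → V) (k i : ℕ) (ε : ℝ) [DecidableEq (V × V)] :
    ∀ Q : List V, List.Chain' (Ei E v k i) Q → Q.Nodup →
    ∃ (N : ℕ) (S : Finset (V × V)),
      wt (wP v k ε) Q = N + ε * S.card ∧
      (∀ p ∈ S, p.1 ∈ Q) ∧
      ∀ p ∈ S, ∃ a, a < i ∧ p = (v a, v (a + 1))
  | [] => by intro _ _; exact ⟨0, ∅, by simp [wt], by simp, by simp⟩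
  | [y] => by intro _ _; exact ⟨0, ∅, by simp [wt], by simp, by simp⟩
  | y :: z :: Q => by
    intro hc hnd
    obtain ⟨hyz, hc'⟩ := List.isChain_cons_cons.1 hc
    obtain ⟨N, S, hwt, hmem, hS⟩ :=
      count_bound E v k i ε (z :: Q) hc' (List.nodup_cons.1 hnd).2
    have hwteq : wt (wP v k ε) (y :: z :: Q) = wP v k ε y z + wt (wP v k ε) (z :: Q) := rfl
    by_cases hP : ∃ a, a < k ∧ y = v a ∧ z = v (a + 1)
    · have hwP : wP v k ε y z = ε := by simp only [wP]; exact if_pos hP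
      obtain ⟨a, hak, hya, hza⟩ := hP
      obtain ⟨-, -, hznd⟩ := hyz
      have hai : a < i := by
        by_contra hcon
        exact hznd ⟨a + 1, by omega, by omega, hza⟩
      have hyS : (y, z) ∉ S := by
        intro hmem'
        exact (List.nodup_cons.1 hnd).1 (hmem _ hmem')
      refine ⟨N, insert (y, z) S, ?_, ?_, ?_⟩
      · rw [hwteq, Finset.card_insert_of_notMem hyS, hwP, hwt]
        push_cast; ring
      · intro p hp
        rcases Finset.mem_insert.1 hp with rfl | hp
        · exact List.mem_cons_self
        · exact List.mem_cons_of_mem _ (hmem p hp)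
      · intro p hp
        rcases Finset.mem_insert.1 hp with rfl | hp
        · exact ⟨a, hai, by rw [hya, hza]⟩
        · exact hS p hp
    · have hwP : wP v k ε y z = 1 := by simp only [wP]; exact if_neg hP
      refine ⟨N + 1, S, ?_, ?_, hS⟩
      · rw [hwteq, hwP, hwt]; push_cast; ring
      · intro p hp; exact List.mem_cons_of_mem _ (hmem p hp)

end RPAux

/-- Let `0 ≤ i ≤ k−1` and let `x ≠ v (i+1)` be a vertex such that
`d_{G^w_{i+1}}(s,x) = ε·(i+1) + d_{G'}(v (i+1), x)` with `d_{G'}(v (i+1), x) = m` finite.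
Then `⌊d_{G^w_i}(s,x)⌋ ≥ ⌊d_{G^w_{i+1}}(s,x)⌋ + 1` (trivially, if `d_{G^w_i}(s,x) = ∞`). -/
theorem stmt7 {V : Type*} [Fintype V]
    (E : V → V → Prop) (n k : ℕ) (hn : Fintype.card V = n)
    (v : ℕ → V) (s t : V) (hs : v 0 = s) (ht : v k = t)
    (hPwalk : RP.IsWalk E ((List.range (k + 1)).map v) s t)
    (hPshort : RP.dist E s t = (k : ℕ∞))
    (ε : ℝ) (hε0 : 0 < ε) (hε1 : ε < 1 / n)
    (i : ℕ) (hik : i + 1 ≤ k)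
    (x : V) (hxne : x ≠ v (i + 1))
    (m : ℕ) (hm : RP.dist (RP.Eres E v k) (v (i + 1)) x = (m : ℕ∞))
    (hdx : RP.wdist (RP.Ei E v k (i + 1)) (RP.wP v k ε) s x =
      ENNReal.ofReal (ε * ((i : ℝ) + 1) + (m : ℝ))) :
    RP.wdist (RP.Ei E v k i) (RP.wP v k ε) s x = ⊤ ∨
    ⌊(RP.wdist (RP.Ei E v k (i + 1)) (RP.wP v k ε) s x).toReal⌋ + 1 ≤
      ⌊(RP.wdist (RP.Ei E v k i) (RP.wP v k ε) s x).toReal⌋ := by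
  classical
  -- n is positive
  have hn1 : 0 < n := by
    rcases Nat.eq_zero_or_pos n with h | h
    · rw [h] at hε1; norm_num at hε1; linarith
    · exact h
  have hnR : (0:ℝ) < n := by exact_mod_cast hn1
  -- k ≤ n - 1 via a nodup walk from s to t
  obtain ⟨Q₀, hQ₀walk, hQ₀nd, -, -⟩ :=
    RPAux.exists_nodup_walk (E := E) (w := fun _ _ => (0:ℝ)) (fun _ _ => le_refl 0)
      (((List.range (k + 1)).map v).length) ((List.range (k + 1)).map v) s t le_rfl hPwalk
  have hdistle : RP.dist E s t ≤ (RP.pathLen Q₀ : ℕ∞) :=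
    sInf_le ⟨Q₀, hQ₀walk, rfl⟩
  rw [hPshort] at hdistle
  have hk0 : k ≤ RP.pathLen Q₀ := by exact_mod_cast hdistle
  have hQ₀len : Q₀.length ≤ n := hn ▸ hQ₀nd.length_le_card
  have hkn : i + 1 ≤ n := by
    have : RP.pathLen Q₀ = Q₀.length - 1 := rfl
    omega
  have hε_small : ε * ((i:ℝ) + 1) < 1 := by
    have hinR : ((i:ℝ) + 1) ≤ n := by exact_mod_cast hkn
    have h1 : ε * ((i:ℝ) + 1) ≤ ε * n := by nlinarith
    have h2 : ε * n < (1 / n) * n := by nlinarith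
    have h3 : (1 / (n:ℝ)) * n = 1 := by field_simp
    linarith
  -- floor of the (i+1)-distance
  have htr : (RP.wdist (RP.Ei E v k (i + 1)) (RP.wP v k ε) s x).toReal
      = ε * ((i:ℝ) + 1) + m := by
    rw [hdx, ENNReal.toReal_ofReal (by positivity)]
  have hfloor1 : ⌊(RP.wdist (RP.Ei E v k (i + 1)) (RP.wP v k ε) s x).toReal⌋ = (m:ℤ) := by
    rw [htr]
    rw [Int.floor_eq_iff]
    have hpos : (0:ℝ) < ε * ((i:ℝ) + 1) := by positivity
    constructor
    · push_cast; linarith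
    · push_cast; linarith
  by_cases htop : RP.wdist (RP.Ei E v k i) (RP.wP v k ε) s x = ⊤
  · exact Or.inl htop
  right
  have hwPnn : ∀ a b, 0 ≤ RP.wP v k ε a b := by
    intro a b
    simp only [RP.wP]
    split
    · linarith
    · norm_num
  -- every walk in G^w_i from s to x has weight at least m+1
  have key : ∀ r ∈ ((fun p => ENNReal.ofReal (RP.wt (RP.wP v k ε) p)) ''
      {p | RP.IsWalk (RP.Ei E v k i) p s x}), (((m + 1 : ℕ)) : ℝ≥0∞) ≤ r := by
    rintro r ⟨Q, hQ, rfl⟩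
    obtain ⟨Q', hQ'w, hQ'nd, -, hQ'wt⟩ :=
      RPAux.exists_nodup_walk hwPnn Q.length Q s x le_rfl hQ
    have hQ'w1 : RP.IsWalk (RP.Ei E v k (i + 1)) Q' s x :=
      RPAux.isWalk_mono (fun _ _ h => RPAux.Ei_mono h) hQ'w
    have hle : RP.wdist (RP.Ei E v k (i + 1)) (RP.wP v k ε) s x ≤
        ENNReal.ofReal (RP.wt (RP.wP v k ε) Q') := sInf_le ⟨Q', hQ'w1, rfl⟩
    rw [hdx] at hle
    have hwtnn : 0 ≤ RP.wt (RP.wP v k ε) Q' := RPAux.wt_nonneg hwPnn Q'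
    have hreal : ε * ((i:ℝ) + 1) + m ≤ RP.wt (RP.wP v k ε) Q' :=
      (ENNReal.ofReal_le_ofReal_iff hwtnn).1 hle
    obtain ⟨N, S, hwt, hmem, hS⟩ :=
      RPAux.count_bound E v k i ε Q' hQ'w.2.2.2 hQ'nd
    have hSi : S.card ≤ i := by
      have hsub : S ⊆ (Finset.range i).image (fun a => (v a, v (a + 1))) := by
        intro p hp
        obtain ⟨a, hai, rfl⟩ := hS p hp
        exact Finset.mem_image.2 ⟨a, Finset.mem_range.2 hai, rfl⟩
      calc S.card ≤ ((Finset.range i).image (fun a => (v a, v (a + 1)))).card :=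
            Finset.card_le_card hsub
        _ ≤ (Finset.range i).card := Finset.card_image_le
        _ = i := Finset.card_range i
    have hSiR : (S.card : ℝ) ≤ i := by exact_mod_cast hSi
    have hmN : (m:ℝ) < N := by
      rw [hwt] at hreal; nlinarith
    have hmN' : m + 1 ≤ N := by
      have : m < N := by exact_mod_cast hmN
      omega
    have hwtQ' : ((m:ℝ) + 1) ≤ RP.wt (RP.wP v k ε) Q' := by
      rw [hwt]
      have hNR : ((m:ℝ) + 1) ≤ N := by exact_mod_cast hmN'
      have : (0:ℝ) ≤ ε * S.card := by positivity
      linarith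
    have hwtQ : ((m:ℝ) + 1) ≤ RP.wt (RP.wP v k ε) Q := le_trans hwtQ' hQ'wt
    calc (((m + 1 : ℕ)) : ℝ≥0∞) = ENNReal.ofReal ((m:ℝ) + 1) := by
          rw [← ENNReal.ofReal_natCast (m + 1)]; norm_num
      _ ≤ ENNReal.ofReal (RP.wt (RP.wP v k ε) Q) := ENNReal.ofReal_le_ofReal hwtQ
  have hge : (((m + 1 : ℕ)) : ℝ≥0∞) ≤ RP.wdist (RP.Ei E v k i) (RP.wP v k ε) s x :=
    le_sInf key
  have hgeR : ((m:ℝ) + 1) ≤ (RP.wdist (RP.Ei E v k i) (RP.wP v k ε) s x).toReal := by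
    have h := ENNReal.toReal_mono htop hge
    rw [ENNReal.toReal_natCast] at h
    push_cast at h
    linarith
  rw [hfloor1]
  rw [Int.le_floor]
  push_cast
  linarith
end

section
/- For all integers q ≥ 0 and j with 0 ≤ j ≤ ⌈√n⌉ − 1 and 2q⌈√n⌉ + j ≤ k: if d_{G^A}(r, v_{2q⌈√n⌉+j}) ≤ (q+1)·⌈√n⌉, then d_{G'}(v_{2q⌈√n⌉}, v_{2q⌈√n⌉+j}) = d_{G^A}(r, v_{2q⌈√n⌉+j}) − q·⌈√n⌉; otherwise d_{G'}(v_{2q⌈√n⌉}, v_{2q⌈√n⌉+j}) > ⌈√n⌉. -/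
open scoped ENat ENNReal

namespace RP

variable {V : Type*}

/-- Edge relation of the auxiliary graph `G^A_z`: the edges of `G'` (between `some`-vertices)
together with the edges `(r_z, v (z + 2q⌈√n⌉))` from the new source `none`. -/
def EAz (E : V → V → Prop) (v : ℕ → V) (k sqn z : ℕ) : Option V → Option V → Prop :=
  fun a b =>
    (∃ x y, a = some x ∧ b = some y ∧ Eres E v k x y) ∨
    (a = none ∧ ∃ q, z + 2 * q * sqn ≤ k ∧ b = some (v (z + 2 * q * sqn)))

/-- Weights of `G^A_z`: the edge `(r_z, v (z + 2q⌈√n⌉))` has weight `q·⌈√n⌉`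
(with the least such `q`); every edge of `G'` has weight `1`. -/
noncomputable def wAz (v : ℕ → V) (k sqn z : ℕ) : Option V → Option V → ℝ :=
  fun a b =>
    match a, b with
    | none, some y =>
        (sqn : ℝ) * ((sInf {q : ℕ | z + 2 * q * sqn ≤ k ∧ y = v (z + 2 * q * sqn)} : ℕ) : ℝ)
    | _, _ => 1

end RP

namespace RP

variable {V : Type*}

theorem sInf_natCast_image_enat (S : Set ℕ) (h : S.Nonempty) :
    sInf ((fun m : ℕ => (m : ℕ∞)) '' S) = ((sInf S : ℕ) : ℕ∞) := by
  refine le_antisymm (sInf_le ⟨_, Nat.sInf_mem h, rfl⟩) (le_sInf ?_)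
  rintro _ ⟨m, hm, rfl⟩
  simpa using (Nat.cast_le (α := ℕ∞)).mpr (Nat.sInf_le hm)

theorem sInf_natCast_image_ennreal (S : Set ℕ) (h : S.Nonempty) :
    sInf ((fun m : ℕ => (m : ℝ≥0∞)) '' S) = ((sInf S : ℕ) : ℝ≥0∞) := by
  refine le_antisymm (sInf_le ⟨_, Nat.sInf_mem h, rfl⟩) (le_sInf ?_)
  rintro _ ⟨m, hm, rfl⟩
  simpa using (Nat.cast_le (α := ℝ≥0∞)).mpr (Nat.sInf_le hm)

theorem isWalk_append {E : V → V → Prop} {p r : List V} {u w x : V}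
    (hp : IsWalk E p u w) (hr : IsWalk E r w x) : IsWalk E (p ++ r.tail) u x := by
  obtain ⟨hp0, hp1, hp2, hp3⟩ := hp
  obtain ⟨hr0, hr1, hr2, hr3⟩ := hr
  obtain ⟨b, rt, rfl⟩ := List.exists_cons_of_ne_nil hr0
  simp only [List.head?_cons, Option.some.injEq] at hr1
  subst hr1
  cases rt with
  | nil =>
      simp only [List.getLast?_singleton, Option.some.injEq] at hr2
      subst hr2
      simpa using ⟨hp0, hp1, hp2, hp3⟩
  | cons c rt' =>
      refine ⟨by simp [hp0], ?_, ?_, ?_⟩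
      · rw [List.head?_append, hp1]; rfl
      · rw [List.getLast?_append]
        rw [List.getLast?_cons_cons] at hr2
        simp only [List.tail_cons, hr2]; rfl
      · refine List.isChain_append.mpr ?_
        refine ⟨hp3, (List.isChain_cons.mp hr3).2, ?_⟩
        intro a ha y hy
        rw [hp2] at ha
        simp only [List.tail_cons, List.head?_cons, Option.mem_def, Option.some.injEq] at ha hy
        subst ha; subst hy
        exact (List.isChain_cons_cons.mp hr3).1

theorem pathLen_append (p r : List V) (hp : p ≠ []) :
    pathLen (p ++ r.tail) = pathLen p + pathLen r := by
  have h1 : 1 ≤ p.length := List.length_pos_iff.mpr hp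
  simp only [pathLen, List.length_append, List.length_tail]
  omega

theorem dist_le_walk {E : V → V → Prop} {p : List V} {u w : V} (h : IsWalk E p u w) :
    dist E u w ≤ (pathLen p : ℕ∞) := sInf_le ⟨p, h, rfl⟩

theorem dist_attained {E : V → V → Prop} {u w : V} {m : ℕ} (h : dist E u w = (m : ℕ∞)) :
    ∃ p, IsWalk E p u w ∧ pathLen p = m := by
  have hne : {p | IsWalk E p u w}.Nonempty := by
    by_contra hc
    rw [Set.not_nonempty_iff_eq_empty] at hc
    rw [dist, hc] at h
    simp at h
  have hS : (pathLen '' {p | IsWalk E p u w}).Nonempty := hne.image _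
  have hd : dist E u w = ((sInf (pathLen '' {p | IsWalk E p u w}) : ℕ) : ℕ∞) := by
    rw [dist, show ((fun p : List V => (pathLen p : ℕ∞)) '' {p | IsWalk E p u w})
        = (fun m : ℕ => (m : ℕ∞)) '' (pathLen '' {p | IsWalk E p u w}) from
        (Set.image_image _ _ _).symm]
    exact sInf_natCast_image_enat _ hS
  rw [h] at hd
  obtain ⟨p, hp, hpl⟩ := Nat.sInf_mem hS
  exact ⟨p, hp, by rw [hpl]; exact_mod_cast hd.symm⟩

end RP

namespace RP

variable {V : Type*}

theorem isWalk_of_eres {E : V → V → Prop} {v : ℕ → V} {k : ℕ} {p : List V} {u w : V}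
    (h : IsWalk (Eres E v k) p u w) : IsWalk E p u w :=
  ⟨h.1, h.2.1, h.2.2.1, List.IsChain.imp (fun _ _ hh => hh.1) h.2.2.2⟩

theorem walk_range'_s9 {E : V → V → Prop} {v : ℕ → V} {k : ℕ}
    (hP : IsWalk E ((List.range (k + 1)).map v) (v 0) (v k))
    {a b : ℕ} (hab : a ≤ b) (hbk : b ≤ k) :
    IsWalk E ((List.range' a (b - a + 1)).map v) (v a) (v b) ∧
      pathLen ((List.range' a (b - a + 1)).map v) = b - a := by
  have hinf : (List.range' a (b - a + 1)).map v <:+: (List.range (k + 1)).map v := by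
    refine List.IsInfix.map v ?_
    refine ⟨List.range' 0 a, List.range' (b + 1) (k - b), ?_⟩
    rw [List.range_eq_range']
    rw [show List.range' 0 a ++ List.range' a (b - a + 1) ++ List.range' (b + 1) (k - b)
        = (List.range' 0 a ++ List.range' a (b - a + 1)) ++ List.range' (b + 1) (k - b)
        from by simp]
    rw [show List.range' a (b - a + 1) = List.range' (0 + 1 * a) (b - a + 1) from by simp,
      List.range'_append]
    rw [show (a + (b - a + 1)) = b + 1 from by omega,
      show List.range' (b + 1) (k - b) = List.range' (0 + 1 * (b + 1)) (k - b) from by simp,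
      List.range'_append]
    congr 1
    omega
  refine ⟨⟨by simp, ?_, ?_, hP.2.2.2.infix hinf⟩, by simp [pathLen]⟩
  · rw [List.range'_succ]; simp
  · rw [List.range'_concat]
    simp only [List.map_append]
    rw [List.getLast?_append]
    simp only [List.map_cons, List.map_nil, List.getLast?_singleton]
    rw [show a + 1 * (b - a) = b from by omega]
    rfl

theorem walk_len_lb {E : V → V → Prop} {v : ℕ → V} {k : ℕ}
    (hP : IsWalk E ((List.range (k + 1)).map v) (v 0) (v k))
    (hShort : dist E (v 0) (v k) = (k : ℕ∞))
    {a b : ℕ} (hab : a ≤ b) (hbk : b ≤ k) {p : List V}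
    (hp : IsWalk E p (v a) (v b)) : b - a ≤ pathLen p := by
  obtain ⟨w1, hlen1⟩ := walk_range'_s9 hP (Nat.zero_le a) (le_trans hab hbk)
  obtain ⟨w2, hlen2⟩ := walk_range'_s9 hP hbk le_rfl
  have c1 := isWalk_append w1 hp
  have c2 := isWalk_append c1 w2
  have hk := dist_le_walk c2
  rw [hShort] at hk
  have hk' : k ≤ pathLen (((List.range' 0 (a - 0 + 1)).map v ++ p.tail) ++
      ((List.range' b (k - b + 1)).map v).tail) := by exact_mod_cast hk
  rw [pathLen_append _ _ (by simp), pathLen_append _ _ w1.1] at hk'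
  rw [hlen1, hlen2] at hk'
  omega

theorem v_inj_s9 {E : V → V → Prop} {v : ℕ → V} {k : ℕ}
    (hP : IsWalk E ((List.range (k + 1)).map v) (v 0) (v k))
    (hShort : dist E (v 0) (v k) = (k : ℕ∞))
    {a b : ℕ} (ha : a ≤ k) (hb : b ≤ k) (hvab : v a = v b) : a = b := by
  have key : ∀ a b : ℕ, a < b → b ≤ k → v a = v b → False := by
    intro a b hab hbk hv
    obtain ⟨w1, hlen1⟩ := walk_range'_s9 hP (Nat.zero_le a) (le_trans hab.le hbk)
    obtain ⟨w2, hlen2⟩ := walk_range'_s9 hP hbk le_rfl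
    rw [hv] at w1
    have c := isWalk_append w1 w2
    have hk := dist_le_walk c
    rw [hShort] at hk
    have hk' : k ≤ pathLen ((List.range' 0 (a - 0 + 1)).map v ++
        ((List.range' b (k - b + 1)).map v).tail) := by exact_mod_cast hk
    rw [pathLen_append _ _ (by simp), hlen1, hlen2] at hk'
    omega
  rcases lt_trichotomy a b with h | h | h
  · exact absurd (key a b h hb hvab) not_false
  · exact h
  · exact absurd (key b a h ha hvab.symm) not_false

end RP

namespace RP

variable {V : Type*}

theorem wt_cons_cons (w : V → V → ℝ) (a b : V) (rest : List V) :
    wt w (a :: b :: rest) = w a b + wt w (b :: rest) := rfl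

theorem wt_map_some (v : ℕ → V) (k sqn z : ℕ) :
    ∀ p : List V, wt (wAz v k sqn z) (p.map some) = ((pathLen p : ℕ) : ℝ)
  | [] => by simp [wt, pathLen]
  | [a] => by simp [wt, pathLen]
  | a :: b :: rest => by
      have ih := wt_map_some v k sqn z (b :: rest)
      simp only [List.map_cons] at ih ⊢
      rw [wt, ih]
      have hw : wAz v k sqn z (some a) (some b) = 1 := rfl
      rw [hw]
      simp only [pathLen, List.length_cons]
      push_cast
      ring

theorem wAz_none {v : ℕ → V} {k sqn : ℕ} (hsqn0 : 0 < sqn)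
    (hinj : ∀ a b, a ≤ k → b ≤ k → v a = v b → a = b)
    {q : ℕ} (hq : 2 * q * sqn ≤ k) :
    wAz v k sqn 0 none (some (v (0 + 2 * q * sqn))) = (sqn : ℝ) * q := by
  have hmem : q ∈ {q' : ℕ | 0 + 2 * q' * sqn ≤ k ∧
      v (0 + 2 * q * sqn) = v (0 + 2 * q' * sqn)} := ⟨by simpa using hq, rfl⟩
  have hSne : ({q' : ℕ | 0 + 2 * q' * sqn ≤ k ∧
      v (0 + 2 * q * sqn) = v (0 + 2 * q' * sqn)} : Set ℕ).Nonempty := ⟨q, hmem⟩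
  have hinf : sInf {q' : ℕ | 0 + 2 * q' * sqn ≤ k ∧
      v (0 + 2 * q * sqn) = v (0 + 2 * q' * sqn)} = q := by
    refine le_antisymm (Nat.sInf_le hmem) ?_
    obtain ⟨h1, h2⟩ := Nat.sInf_mem hSne
    set q0 := sInf {q' : ℕ | 0 + 2 * q' * sqn ≤ k ∧
      v (0 + 2 * q * sqn) = v (0 + 2 * q' * sqn)}
    have := hinj _ _ (by simpa using hq) (by simpa using h1) h2
    have h2q : 2 * q = 2 * q0 := Nat.eq_of_mul_eq_mul_right hsqn0 (by omega)
    omega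
  show (sqn : ℝ) * _ = _
  rw [hinf]

theorem down (E : V → V → Prop) (v : ℕ → V) (k sqn z : ℕ) :
    ∀ (p : List (Option V)) (y x : V), p.head? = some (some y) →
      p.getLast? = some (some x) → p.Chain' (EAz E v k sqn z) →
      ∃ p' : List V, IsWalk (Eres E v k) p' y x ∧ p = p'.map some
  | [], y, x, h1, h2, h3 => by simp at h1
  | [a], y, x, h1, h2, h3 => by
      simp only [List.head?_cons, Option.some.injEq] at h1
      simp only [List.getLast?_singleton, Option.some.injEq] at h2
      subst h1
      obtain rfl : y = x := Option.some.inj h2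
      exact ⟨[y], ⟨by simp, by simp, by simp, List.isChain_singleton _⟩, by simp⟩
  | a :: b :: rest, y, x, h1, h2, h3 => by
      simp only [List.head?_cons, Option.some.injEq] at h1
      subst h1
      obtain ⟨hab, h3'⟩ := List.isChain_cons_cons.mp h3
      rcases hab with ⟨x1, y1, hx1, hy1, hres⟩ | ⟨hnone, _⟩
      · obtain rfl : y = x1 := Option.some.inj hx1
        subst hy1
        rw [List.getLast?_cons_cons] at h2
        obtain ⟨p'', hw, heq⟩ := down E v k sqn z (some y1 :: rest) y1 x rfl h2 h3'
        refine ⟨y :: p'', ⟨by simp, by simp, ?_, ?_⟩, by rw [List.map_cons, ← heq]⟩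
        · obtain ⟨c, pt, rfl⟩ := List.exists_cons_of_ne_nil hw.1
          rw [List.getLast?_cons_cons]
          exact hw.2.2.1
        · refine List.IsChain.cons hw.2.2.2 ?_
          intro z hz
          rw [hw.2.1] at hz
          obtain rfl : y1 = z := by simpa using hz
          exact hres
      · simp at hnone

theorem up (E : V → V → Prop) {v : ℕ → V} {k sqn : ℕ} (hsqn0 : 0 < sqn)
    (hinj : ∀ a b, a ≤ k → b ≤ k → v a = v b → a = b)
    {q : ℕ} (hq : 2 * q * sqn ≤ k) {p' : List V} {x : V}
    (hp' : IsWalk (Eres E v k) p' (v (2 * q * sqn)) x) :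
    IsWalk (EAz E v k sqn 0) (none :: p'.map some) none (some x) ∧
      wt (wAz v k sqn 0) (none :: p'.map some) = ((sqn * q + pathLen p' : ℕ) : ℝ) := by
  obtain ⟨y, pt, rfl⟩ := List.exists_cons_of_ne_nil hp'.1
  obtain rfl : y = v (2 * q * sqn) := Option.some.inj hp'.2.1
  constructor
  · refine ⟨by simp, rfl, ?_, ?_⟩
    · simp only [List.map_cons]
      rw [List.getLast?_cons_cons, ← List.map_cons, List.getLast?_map, hp'.2.2.1]
      rfl
    · refine List.IsChain.cons ?_ ?_
      · rw [List.isChain_map]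
        exact List.IsChain.imp (fun c d hcd => Or.inl ⟨c, d, rfl, rfl, hcd⟩) hp'.2.2.2
      · intro z hz
        simp only [List.map_cons, List.head?_cons, Option.mem_def, Option.some.injEq] at hz
        subst hz
        exact Or.inr ⟨rfl, q, by simpa using hq, by simp⟩
  · simp only [List.map_cons]
    rw [wt, ← List.map_cons, wt_map_some]
    have : wAz v k sqn 0 none (some (v (2 * q * sqn))) = (sqn : ℝ) * q := by
      have := wAz_none (v := v) hsqn0 hinj hq
      simpa using this
    rw [this]
    push_cast
    ring

end RP

/-- (Theorem 1 of Roditty–Zwick, for `G^A = G^A_0`.) For all `q ≥ 0` and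
`0 ≤ j ≤ ⌈√n⌉ − 1` with `2q⌈√n⌉ + j ≤ k`: if `d_{G^A}(r, v (2q⌈√n⌉+j)) ≤ (q+1)·⌈√n⌉`, then
`d_{G'}(v (2q⌈√n⌉), v (2q⌈√n⌉+j)) = d_{G^A}(r, v (2q⌈√n⌉+j)) − q·⌈√n⌉`; otherwise
`d_{G'}(v (2q⌈√n⌉), v (2q⌈√n⌉+j)) > ⌈√n⌉`. -/
theorem stmt9 {V : Type*} [Fintype V]
    (E : V → V → Prop) (n k : ℕ) (hn : Fintype.card V = n)
    (v : ℕ → V) (s t : V) (hs : v 0 = s) (ht : v k = t)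
    (hPwalk : RP.IsWalk E ((List.range (k + 1)).map v) s t)
    (hPshort : RP.dist E s t = (k : ℕ∞))
    (sqn : ℕ) (hsqn : sqn = ⌈Real.sqrt n⌉₊)
    (q j : ℕ) (hj : j < sqn) (hqj : 2 * q * sqn + j ≤ k) :
    (RP.wdist (RP.EAz E v k sqn 0) (RP.wAz v k sqn 0) none (some (v (2 * q * sqn + j))) ≤
        ENNReal.ofReal (((q : ℝ) + 1) * (sqn : ℝ)) →
      ∃ m : ℕ,
        RP.dist (RP.Eres E v k) (v (2 * q * sqn)) (v (2 * q * sqn + j)) = (m : ℕ∞) ∧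
        RP.wdist (RP.EAz E v k sqn 0) (RP.wAz v k sqn 0) none (some (v (2 * q * sqn + j))) =
          ENNReal.ofReal ((m : ℝ) + (q : ℝ) * (sqn : ℝ))) ∧
    (¬ RP.wdist (RP.EAz E v k sqn 0) (RP.wAz v k sqn 0) none (some (v (2 * q * sqn + j))) ≤
        ENNReal.ofReal (((q : ℝ) + 1) * (sqn : ℝ)) →
      (sqn : ℕ∞) < RP.dist (RP.Eres E v k) (v (2 * q * sqn)) (v (2 * q * sqn + j))) := by
  subst hs ht
  have hnV : Nonempty V := ⟨v 0⟩
  have hn0 : 0 < n := hn ▸ Fintype.card_pos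
  have hsqn0 : 0 < sqn := by
    rw [hsqn]
    exact Nat.ceil_pos.mpr (Real.sqrt_pos.mpr (by exact_mod_cast hn0))
  have hinj : ∀ a b, a ≤ k → b ≤ k → v a = v b → a = b :=
    fun a b ha hb h => RP.v_inj_s9 hPwalk hPshort ha hb h
  set x := v (2 * q * sqn + j) with hx
  set Sw : Set ℕ := {a | ∃ (q' : ℕ) (p' : List V), 2 * q' * sqn ≤ k ∧
    RP.IsWalk (RP.Eres E v k) p' (v (2 * q' * sqn)) x ∧ a = sqn * q' + RP.pathLen p'} with hSw
  have himg : (fun p => ENNReal.ofReal (RP.wt (RP.wAz v k sqn 0) p)) ''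
      {p | RP.IsWalk (RP.EAz E v k sqn 0) p none (some x)}
      = (fun m : ℕ => (m : ℝ≥0∞)) '' Sw := by
    ext w0
    constructor
    · rintro ⟨p, hp, rfl⟩
      obtain ⟨hp0, hp1, hp2, hp3⟩ := hp
      obtain ⟨a0, rest, rfl⟩ := List.exists_cons_of_ne_nil hp0
      obtain rfl : a0 = none := Option.some.inj hp1
      have hrest0 : rest ≠ [] := by rintro rfl; simp at hp2
      obtain ⟨b0, rest', rfl⟩ := List.exists_cons_of_ne_nil hrest0
      obtain ⟨hab, h3'⟩ := List.isChain_cons_cons.mp hp3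
      rcases hab with ⟨x1, y1, hx1, hy1, hres⟩ | ⟨-, q0, hq0, hb0⟩
      · simp at hx1
      · subst hb0
        rw [List.getLast?_cons_cons] at hp2
        obtain ⟨p', hw, heq⟩ := RP.down E v k sqn 0 (some (v (0 + 2 * q0 * sqn)) :: rest')
          (v (0 + 2 * q0 * sqn)) x rfl hp2 h3'
        have hw' : RP.IsWalk (RP.Eres E v k) p' (v (2 * q0 * sqn)) x := by
          simpa using hw
        refine ⟨sqn * q0 + RP.pathLen p', ⟨q0, p', by simpa using hq0, hw', rfl⟩, ?_⟩
        show ((sqn * q0 + RP.pathLen p' : ℕ) : ℝ≥0∞)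
          = ENNReal.ofReal (RP.wt (RP.wAz v k sqn 0) (none :: some (v (0 + 2 * q0 * sqn)) :: rest'))
        rw [RP.wt_cons_cons, heq, RP.wt_map_some, RP.wAz_none hsqn0 hinj (by simpa using hq0)]
        rw [← ENNReal.ofReal_natCast]
        congr 1
        push_cast
        ring
    · rintro ⟨a, ⟨q', p', hq', hw', rfl⟩, rfl⟩
      obtain ⟨hwalk, hwt⟩ := RP.up E hsqn0 hinj hq' hw'
      refine ⟨none :: p'.map some, hwalk, ?_⟩
      show ENNReal.ofReal (RP.wt (RP.wAz v k sqn 0) (none :: p'.map some)) = _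
      rw [hwt, ENNReal.ofReal_natCast]
  have hWdef : RP.wdist (RP.EAz E v k sqn 0) (RP.wAz v k sqn 0) none (some x)
      = sInf ((fun m : ℕ => (m : ℝ≥0∞)) '' Sw) := by
    rw [← himg]; rfl
  have hbound : ENNReal.ofReal (((q : ℝ) + 1) * (sqn : ℝ)) = (((q + 1) * sqn : ℕ) : ℝ≥0∞) := by
    rw [show ((q : ℝ) + 1) * (sqn : ℝ) = (((q + 1) * sqn : ℕ) : ℝ) by push_cast; ring,
      ENNReal.ofReal_natCast]
  have h2qk : 2 * q * sqn ≤ k := by omega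
  constructor
  · intro hle
    have hSwne : Sw.Nonempty := by
      by_contra hc
      rw [Set.not_nonempty_iff_eq_empty] at hc
      rw [hWdef, hc, Set.image_empty, sInf_empty, top_le_iff, hbound] at hle
      exact (ENNReal.natCast_ne_top _) hle
    have hWa : RP.wdist (RP.EAz E v k sqn 0) (RP.wAz v k sqn 0) none (some x)
        = ((sInf Sw : ℕ) : ℝ≥0∞) := by
      rw [hWdef, RP.sInf_natCast_image_ennreal _ hSwne]
    obtain ⟨q', p', hq', hw', haeq⟩ := Nat.sInf_mem hSwne
    have hale : sInf Sw ≤ (q + 1) * sqn := by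
      rw [hWa, hbound] at hle
      exact_mod_cast hle
    have hmin : ∀ b ∈ Sw, sInf Sw ≤ b := fun b hb => Nat.sInf_le hb
    have e2 : (q + 1) * sqn = q * sqn + sqn := by ring
    have e1 : sqn * q' = q' * sqn := Nat.mul_comm _ _
    have e1' : sqn * q = q * sqn := Nat.mul_comm _ _
    have e3 : 2 * q * sqn = 2 * (q * sqn) := by ring
    have e4 : 2 * q' * sqn = 2 * (q' * sqn) := by ring
    rcases lt_trichotomy q' q with hlt | rfl | hgt
    · exfalso
      have hA : 2 * q' * sqn ≤ 2 * q * sqn + j :=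
        le_trans (Nat.mul_le_mul_right _ (Nat.mul_le_mul_left _ hlt.le)) (Nat.le_add_right _ _)
      have hlen := RP.walk_len_lb hPwalk hPshort hA hqj (RP.isWalk_of_eres hw')
      have e5 : q' * sqn + sqn ≤ q * sqn := by
        have h6 : (q' + 1) * sqn ≤ q * sqn := Nat.mul_le_mul_right _ hlt
        have e6 : (q' + 1) * sqn = q' * sqn + sqn := by ring
        omega
      obtain rfl : j = 0 := by omega
      have hxw : RP.IsWalk (RP.Eres E v k) [x] (v (2 * q * sqn)) x := by
        refine ⟨by simp, ?_, by simp, List.isChain_singleton _⟩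
        rw [hx]
        norm_num
      have htriv := hmin _ ⟨q, [x], h2qk, hxw, rfl⟩
      have hpl : RP.pathLen [x] = 0 := rfl
      omega
    · have hmle := RP.dist_le_walk hw'
      have hfin : RP.dist (RP.Eres E v k) (v (2 * q' * sqn)) x ≠ ⊤ := by
        intro hTop
        rw [hTop] at hmle
        rw [top_le_iff] at hmle
        exact (WithTop.natCast_ne_top _) hmle
      obtain ⟨m0, hm0⟩ := WithTop.ne_top_iff_exists.mp hfin
      obtain ⟨p0, hp0w, hp0len⟩ := RP.dist_attained hm0.symm
      have h1 := hmin _ ⟨q', p0, h2qk, hp0w, by rw [hp0len]⟩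
      have h2 : m0 ≤ RP.pathLen p' := by
        rw [← hm0] at hmle
        have h2' : ((m0 : ℕ) : ℕ∞) ≤ ((RP.pathLen p' : ℕ) : ℕ∞) := hmle
        exact_mod_cast h2'
      have hL : RP.pathLen p' = m0 := by omega
      refine ⟨m0, hm0.symm, ?_⟩
      rw [hWa, haeq, hL,
        show ((m0 : ℝ) + (q' : ℝ) * (sqn : ℝ)) = (((sqn * q' + m0 : ℕ)) : ℝ) by push_cast; ring,
        ENNReal.ofReal_natCast]
    · exfalso
      have e7 : (q + 1) * sqn ≤ q' * sqn := Nat.mul_le_mul_right _ hgt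
      have hL0 : RP.pathLen p' = 0 ∧ q' * sqn = q * sqn + sqn := by omega
      obtain ⟨c, pt, rfl⟩ := List.exists_cons_of_ne_nil hw'.1
      obtain rfl : pt = [] := by
        have h8 := hL0.1
        simp only [RP.pathLen, List.length_cons, Nat.add_sub_cancel] at h8
        exact List.length_eq_zero_iff.mp h8
      have hc1 : c = v (2 * q' * sqn) := Option.some.inj hw'.2.1
      have hc2 : c = x := Option.some.inj hw'.2.2.1
      have h9 := hinj (2 * q' * sqn) (2 * q * sqn + j) hq' hqj (by rw [← hc1, hc2])
      omega
  · intro hnle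
    rcases eq_or_ne (RP.dist (RP.Eres E v k) (v (2 * q * sqn)) x) ⊤ with htop | hfin
    · rw [htop]
      exact lt_top_iff_ne_top.mpr (by simp)
    · obtain ⟨m0, hm0⟩ := WithTop.ne_top_iff_exists.mp hfin
      obtain ⟨p0, hp0w, hp0len⟩ := RP.dist_attained hm0.symm
      have hWle : RP.wdist (RP.EAz E v k sqn 0) (RP.wAz v k sqn 0) none (some x)
          ≤ ((sqn * q + m0 : ℕ) : ℝ≥0∞) := by
        rw [hWdef]
        exact sInf_le ⟨sqn * q + m0, ⟨q, p0, h2qk, hp0w, by rw [hp0len]⟩, rfl⟩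
      have hgtW : (((q + 1) * sqn : ℕ) : ℝ≥0∞)
          < RP.wdist (RP.EAz E v k sqn 0) (RP.wAz v k sqn 0) none (some x) := by
        rw [← hbound]
        exact lt_of_not_ge hnle
      have h10 : (q + 1) * sqn < sqn * q + m0 := by
        exact_mod_cast lt_of_lt_of_le hgtW hWle
      have e2 : (q + 1) * sqn = q * sqn + sqn := by ring
      have e1' : sqn * q = q * sqn := Nat.mul_comm _ _
      rw [← hm0]
      exact (Nat.cast_lt (α := ℕ∞)).mpr (by omega)
end
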